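/- arXiv:1902.07635 — 3 statements merged into one kernel-verified Lean document; each statement's English description precedes it below -/
import Mathlib

section
/- Let n ≥ 1, let c ∈ ℝ, let K₁,…,Kₙ : ℝ² → ℝ be twice continuously differentiable with compact support, and let Q : (ℝ²)^n → ℝ be bounded, continuous, and translation-invariant. Then for every w ∈ ℝ² the following integration-by-parts identity holds: Σ_{i=1}^n ∫_{(ℝ²)^n} Q(z₁,…,zₙ) (L_c K_i)(w − z_i) ∏_{k≠i} K_k(w − z_k) dz₁ ⋯ dzₙ = c Σ_{i≠j} ∫_{(ℝ²)^n} Q(z₁,…,zₙ) (∂_x K_i)(w − z_i)(∂_x K_j)(w − z_j) ∏_{k∉{i,j}} K_k(w − z_k) dz₁ ⋯ dzₙ, where the second sum runs over all ordered pairs (i,j) with i ≠ j. -/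
open MeasureTheory Finset

/-- Partial derivative in the first ("time") coordinate of `ℝ × ℝ`. -/
noncomputable def pt (f : ℝ × ℝ → ℝ) (w : ℝ × ℝ) : ℝ := fderiv ℝ f w (1, 0)

/-- Partial derivative in the second ("space") coordinate of `ℝ × ℝ`. -/
noncomputable def px (f : ℝ × ℝ → ℝ) (w : ℝ × ℝ) : ℝ := fderiv ℝ f w (0, 1)

/-- The parabolic operator `L_c f = ∂_t f − c ∂_x² f`. -/
noncomputable def Lop (c : ℝ) (f : ℝ × ℝ → ℝ) : ℝ × ℝ → ℝ :=
  fun w => pt f w - c * px (px f) w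

lemma fderivApply_continuous {f : ℝ × ℝ → ℝ} (hf : ContDiff ℝ 1 f) (v : ℝ × ℝ) :
    Continuous fun x => fderiv ℝ f x v :=
  (hf.continuous_fderiv one_ne_zero).clm_apply continuous_const

lemma fderivApply_contDiff {f : ℝ × ℝ → ℝ} (hf : ContDiff ℝ 2 f) (v : ℝ × ℝ) :
    ContDiff ℝ 1 fun x => fderiv ℝ f x v :=
  (hf.fderiv_right (m := 1) (by norm_num)).clm_apply contDiff_const

lemma fderivApply_hcs {f : ℝ × ℝ → ℝ} (hfs : HasCompactSupport f) (v : ℝ × ℝ) :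
    HasCompactSupport fun x => fderiv ℝ f x v :=
  hfs.fderiv_apply ℝ v

/-- A continuous bounded factor times a full product of compactly supported continuous
functions is integrable. -/
lemma intCS (n : ℕ) (Q : (Fin n → ℝ × ℝ) → ℝ) (hQcont : Continuous Q) (w : ℝ × ℝ)
    (g : Fin n → ℝ × ℝ → ℝ) (hg : ∀ k, Continuous (g k))
    (hgs : ∀ k, HasCompactSupport (g k)) :
    Integrable (fun z : Fin n → ℝ × ℝ => Q z * ∏ k, g k (w - z k)) volume := by
  have hcont : Continuous fun z : Fin n → ℝ × ℝ => Q z * ∏ k, g k (w - z k) :=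
    hQcont.mul (continuous_finset_prod _ fun k _ =>
      (hg k).comp (continuous_const.sub (continuous_apply k)))
  have hcs : HasCompactSupport fun z : Fin n → ℝ × ℝ => Q z * ∏ k, g k (w - z k) := by
    apply HasCompactSupport.intro
      (isCompact_univ_pi fun k => (hgs k).image (continuous_const.sub continuous_id))
    intro z hz
    rw [Set.mem_univ_pi] at hz
    push_neg at hz
    obtain ⟨k, hk⟩ := hz
    have h0 : g k (w - z k) = 0 := by
      by_contra h
      exact hk ⟨w - z k, subset_tsupport _ h, sub_sub_cancel w (z k)⟩
    rw [Finset.prod_eq_zero (Finset.mem_univ k) h0, mul_zero]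
  exact hcont.integrable_of_hasCompactSupport hcs

/-- Integrability of one term with a special factor at position `i`. -/
lemma intTerm (n : ℕ) (Q : (Fin n → ℝ × ℝ) → ℝ) (hQcont : Continuous Q) (w : ℝ × ℝ)
    (K : Fin n → ℝ × ℝ → ℝ) (hKc : ∀ k, Continuous (K k))
    (hKs : ∀ k, HasCompactSupport (K k)) (i : Fin n)
    (a : ℝ × ℝ → ℝ) (ha : Continuous a) (has : HasCompactSupport a) :
    Integrable (fun z : Fin n → ℝ × ℝ =>
      Q z * (a (w - z i) * ∏ k ∈ univ.erase i, K k (w - z k))) volume := by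
  have heq : (fun z : Fin n → ℝ × ℝ =>
      Q z * (a (w - z i) * ∏ k ∈ univ.erase i, K k (w - z k)))
      = fun z => Q z * ∏ k, (Function.update K i a) k (w - z k) := by
    funext z
    have h1 : ∏ k ∈ univ.erase i, (Function.update K i a) k (w - z k)
        = ∏ k ∈ univ.erase i, K k (w - z k) :=
      Finset.prod_congr rfl fun k hk => by
        rw [Function.update_of_ne (Finset.mem_erase.mp hk).1]
    rw [← Finset.mul_prod_erase univ (fun k => Function.update K i a k (w - z k))
      (Finset.mem_univ i), Function.update_self, h1]
  rw [heq]
  refine intCS n Q hQcont w _ (fun k => ?_) (fun k => ?_)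
  · rcases eq_or_ne k i with rfl | h
    · rw [Function.update_self]; exact ha
    · rw [Function.update_of_ne h]; exact hKc k
  · rcases eq_or_ne k i with rfl | h
    · rw [Function.update_self]; exact has
    · rw [Function.update_of_ne h]; exact hKs k

/-- Key lemma: the directional derivative (in the translation parameter) of the
translation-invariant integral vanishes. -/
lemma lemA (n : ℕ) (Q : (Fin n → ℝ × ℝ) → ℝ) (M : ℝ)
    (hQbd : ∀ z, |Q z| ≤ M) (hQcont : Continuous Q)
    (hQinv : ∀ (h : ℝ × ℝ) (z : Fin n → ℝ × ℝ), Q (fun i => z i + h) = Q z)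
    (w v : ℝ × ℝ) (f : Fin n → ℝ × ℝ → ℝ)
    (hf : ∀ i, ContDiff ℝ 1 (f i)) (hfs : ∀ i, HasCompactSupport (f i)) :
    ∑ i, ∫ z : Fin n → ℝ × ℝ,
        Q z * (fderiv ℝ (f i) (w - z i) v * ∏ k ∈ univ.erase i, f k (w - z k)) = 0 := by
  classical
  -- bounds
  obtain ⟨B, hB1, hB⟩ : ∃ B : ℝ, 1 ≤ B ∧ ∀ k, (∀ x, |f k x| ≤ B) ∧
      (∀ x, ‖fderiv ℝ (f k) x‖ ≤ B) := by
    choose C hC using fun k => (hfs k).exists_bound_of_continuous (hf k).continuous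
    choose D hD using fun k =>
      ((hfs k).fderiv ℝ).exists_bound_of_continuous ((hf k).continuous_fderiv one_ne_zero)
    refine ⟨1 + ∑ k, (|C k| + |D k|),
      le_add_of_nonneg_right (Finset.sum_nonneg fun k _ => by positivity), fun k => ?_⟩
    have hle : |C k| + |D k| ≤ ∑ k', (|C k'| + |D k'|) :=
      Finset.single_le_sum (f := fun k' => |C k'| + |D k'|)
        (fun k' _ => by positivity) (Finset.mem_univ k)
    constructor
    · intro x
      have := hC k x
      rw [Real.norm_eq_abs] at this
      have h2 : C k ≤ |C k| + |D k| :=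
        (le_abs_self _).trans (le_add_of_nonneg_right (abs_nonneg _))
      linarith
    · intro x
      have := hD k x
      have h2 : D k ≤ |C k| + |D k| :=
        (le_abs_self _).trans (le_add_of_nonneg_left (abs_nonneg _))
      linarith
  -- radius
  obtain ⟨R, hR⟩ : ∃ R : ℝ, ∀ k, tsupport (f k) ⊆ Metric.closedBall 0 R := by
    choose r hr using fun k => ((hfs k).isBounded.subset_closedBall (0 : ℝ × ℝ))
    refine ⟨∑ k, |r k|, fun k => (hr k).trans (Metric.closedBall_subset_closedBall ?_)⟩
    exact (le_abs_self _).trans (Finset.single_le_sum (f := fun k' => |r k'|)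
      (fun k' _ => abs_nonneg _) (Finset.mem_univ k))
  have hM0 : 0 ≤ M := (abs_nonneg _).trans (hQbd fun _ => 0)
  set S : Set (Fin n → ℝ × ℝ) := Set.pi Set.univ fun _ => Metric.closedBall w (R + ‖v‖)
    with hS
  have hSmeas : MeasurableSet S := MeasurableSet.univ_pi fun _ => measurableSet_closedBall
  have hSfin : volume S < ⊤ := by
    rw [hS, volume_pi_pi]
    exact ENNReal.prod_lt_top fun k _ => measure_closedBall_lt_top
  set Cb : ℝ := M * (n * (B ^ n * (B * ‖v‖))) with hCb
  -- vanishing outside S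
  have hout : ∀ s : ℝ, |s| ≤ 1 → ∀ z : Fin n → ℝ × ℝ, z ∉ S →
      ∃ k, f k (w + s • v - z k) = 0 ∧ fderiv ℝ (f k) (w + s • v - z k) = 0 := by
    intro s hs z hz
    rw [hS, Set.mem_univ_pi] at hz
    push_neg at hz
    obtain ⟨k, hk⟩ := hz
    have hnot : w + s • v - z k ∉ tsupport (f k) := by
      intro hmem
      have h1 : ‖w + s • v - z k‖ ≤ R := by
        have := hR k hmem
        rwa [Metric.mem_closedBall, dist_zero_right] at this
      apply hk
      rw [Metric.mem_closedBall, dist_eq_norm]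
      calc ‖z k - w‖ = ‖s • v - (w + s • v - z k)‖ := by congr 1; abel
        _ ≤ ‖s • v‖ + ‖w + s • v - z k‖ := norm_sub_le _ _
        _ ≤ 1 * ‖v‖ + R := by
            refine add_le_add ?_ h1
            rw [norm_smul, Real.norm_eq_abs]
            exact mul_le_mul_of_nonneg_right hs (norm_nonneg v)
        _ = R + ‖v‖ := by ring
    exact ⟨k, image_eq_zero_of_notMem_tsupport hnot,
      Function.notMem_support.mp fun hsup => hnot (support_fderiv_subset ℝ hsup)⟩
  -- the integrand family and its derivative
  set F : ℝ → (Fin n → ℝ × ℝ) → ℝ := fun s z => Q z * ∏ k, f k (w + s • v - z k) with hF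
  set F' : ℝ → (Fin n → ℝ × ℝ) → ℝ := fun s z =>
    Q z * ∑ i, (∏ k ∈ univ.erase i, f k (w + s • v - z k)) *
      fderiv ℝ (f i) (w + s • v - z i) v with hF'
  have hFcont : ∀ s, Continuous (F s) := fun s =>
    hQcont.mul (continuous_finset_prod _ fun k _ =>
      (hf k).continuous.comp (continuous_const.sub (continuous_apply k)))
  have hF'cont : ∀ s, Continuous (F' s) := fun s =>
    hQcont.mul (continuous_finset_sum _ fun i _ =>
      (continuous_finset_prod _ fun k _ =>
        (hf k).continuous.comp (continuous_const.sub (continuous_apply k))).mul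
      ((fderivApply_continuous (hf i) v).comp (continuous_const.sub (continuous_apply i))))
  have hFint : Integrable (F 0) volume :=
    intCS n Q hQcont (w + (0 : ℝ) • v) f (fun k => (hf k).continuous) hfs
  have hbound : ∀ z, ∀ s ∈ Metric.ball (0 : ℝ) 1,
      ‖F' s z‖ ≤ S.indicator (fun _ => Cb) z := by
    intro z s hs
    have hs1 : |s| ≤ 1 := by
      rw [Metric.mem_ball, Real.dist_eq, sub_zero] at hs
      exact hs.le
    by_cases hz : z ∈ S
    · rw [Set.indicator_of_mem hz]
      have key : ∀ i : Fin n,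
          |(∏ k ∈ univ.erase i, f k (w + s • v - z k)) *
            fderiv ℝ (f i) (w + s • v - z i) v| ≤ B ^ n * (B * ‖v‖) := by
        intro i
        rw [abs_mul]
        have h1 : |∏ k ∈ univ.erase i, f k (w + s • v - z k)| ≤ B ^ n := by
          rw [Finset.abs_prod]
          calc ∏ k ∈ univ.erase i, |f k (w + s • v - z k)|
              ≤ ∏ _k ∈ univ.erase i, B :=
                Finset.prod_le_prod (fun k _ => abs_nonneg _) (fun k _ => (hB k).1 _)
            _ = B ^ (univ.erase i).card := Finset.prod_const B
            _ ≤ B ^ n := by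
                apply pow_le_pow_right₀ hB1
                exact (Finset.card_erase_le).trans (by simp)
        have h2 : |fderiv ℝ (f i) (w + s • v - z i) v| ≤ B * ‖v‖ := by
          rw [← Real.norm_eq_abs]
          calc ‖fderiv ℝ (f i) (w + s • v - z i) v‖
              ≤ ‖fderiv ℝ (f i) (w + s • v - z i)‖ * ‖v‖ :=
                ContinuousLinearMap.le_opNorm _ _
            _ ≤ B * ‖v‖ := mul_le_mul_of_nonneg_right ((hB i).2 _) (norm_nonneg _)
        exact mul_le_mul h1 h2 (abs_nonneg _) (by positivity)
      have habs : |∑ i, (∏ k ∈ univ.erase i, f k (w + s • v - z k)) *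
          fderiv ℝ (f i) (w + s • v - z i) v| ≤ n * (B ^ n * (B * ‖v‖)) := by
        calc |∑ i, (∏ k ∈ univ.erase i, f k (w + s • v - z k)) *
            fderiv ℝ (f i) (w + s • v - z i) v|
            ≤ ∑ i, |(∏ k ∈ univ.erase i, f k (w + s • v - z k)) *
              fderiv ℝ (f i) (w + s • v - z i) v| := Finset.abs_sum_le_sum_abs _ _
          _ ≤ ∑ _i : Fin n, B ^ n * (B * ‖v‖) := Finset.sum_le_sum fun i _ => key i
          _ = n * (B ^ n * (B * ‖v‖)) := by
              rw [Finset.sum_const, card_univ, Fintype.card_fin, nsmul_eq_mul]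
      calc ‖F' s z‖ = |Q z| * |∑ i, (∏ k ∈ univ.erase i, f k (w + s • v - z k)) *
            fderiv ℝ (f i) (w + s • v - z i) v| := by
            rw [hF', Real.norm_eq_abs, abs_mul]
        _ ≤ M * (n * (B ^ n * (B * ‖v‖))) :=
            mul_le_mul (hQbd z) habs (abs_nonneg _) hM0
        _ = Cb := rfl
    · rw [Set.indicator_of_notMem hz]
      obtain ⟨k, hk1, hk2⟩ := hout s hs1 z hz
      have hz0 : F' s z = 0 := by
        simp only [hF']
        have hterm : ∀ i ∈ univ, (∏ k' ∈ univ.erase i, f k' (w + s • v - z k')) *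
            fderiv ℝ (f i) (w + s • v - z i) v = 0 := by
          intro i _
          rcases eq_or_ne i k with rfl | hik
          · rw [hk2]; simp
          · rw [Finset.prod_eq_zero (Finset.mem_erase.mpr ⟨hik.symm, Finset.mem_univ k⟩) hk1,
              zero_mul]
        rw [Finset.sum_eq_zero hterm, mul_zero]
      rw [hz0, norm_zero]
  have hboundInt : Integrable (S.indicator fun _ => Cb) volume := by
    rw [integrable_indicator_iff hSmeas]
    exact integrableOn_const hSfin.ne
  have hdiff : ∀ z : Fin n → ℝ × ℝ, ∀ s : ℝ, HasDerivAt (F · z) (F' s z) s := by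
    intro z s
    have hfac : ∀ i : Fin n, HasDerivAt (fun s : ℝ => f i (w + s • v - z i))
        (fderiv ℝ (f i) (w + s • v - z i) v) s := by
      intro i
      have h2 : HasDerivAt (fun s : ℝ => w + s • v - z i) v s := by
        simpa using (((hasDerivAt_id s).smul_const v).const_add w).sub_const (z i)
      have h1 := ((hf i).differentiable one_ne_zero (w + s • v - z i)).hasFDerivAt
      exact h1.comp_hasDerivAt s h2
    have hprod := HasDerivAt.finset_prod (u := univ)
      (f := fun (i : Fin n) (s : ℝ) => f i (w + s • v - z i))
      (f' := fun i => fderiv ℝ (f i) (w + s • v - z i) v) (fun i _ => hfac i)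
    have := hprod.const_mul (Q z)
    simpa [hF, hF', smul_eq_mul] using this
  have hmain := hasDerivAt_integral_of_dominated_loc_of_deriv_le (μ := volume)
    (F := F) (F' := F') (x₀ := 0) (s := Metric.ball 0 1) (bound := S.indicator fun _ => Cb)
    (Metric.ball_mem_nhds 0 one_pos)
    (Filter.Eventually.of_forall fun s => (hFcont s).aestronglyMeasurable)
    hFint ((hF'cont 0).aestronglyMeasurable)
    (Filter.Eventually.of_forall fun z s hs => hbound z s hs)
    hboundInt
    (Filter.Eventually.of_forall fun z s _ => hdiff z s)
  -- the integral is constant in the translation parameter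
  have hconst : ∀ s : ℝ, ∫ z, F s z = ∫ z, F 0 z := by
    intro s
    have h1 : ∫ z, F s z = ∫ z, F s (z + fun _ => s • v) :=
      (integral_add_right_eq_self (F s) (fun _ => s • v)).symm
    rw [h1]
    have h2 : (fun z : Fin n → ℝ × ℝ => F s (z + fun _ => s • v)) = F 0 := by
      funext z
      show Q (fun i => z i + s • v) * ∏ k, f k (w + s • v - (z k + s • v))
          = Q z * ∏ k, f k (w + (0 : ℝ) • v - z k)
      rw [hQinv (s • v) z]
      refine congrArg _ (Finset.prod_congr rfl fun k _ => ?_)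
      congr 1
      rw [zero_smul, add_zero]
      abel
    rw [h2]
  have hzero : ∫ z, F' 0 z = 0 := by
    have hg : (fun s : ℝ => ∫ z, F s z) = fun _ => ∫ z, F 0 z := funext hconst
    have : HasDerivAt (fun s : ℝ => ∫ z, F s z) 0 0 := by
      rw [hg]; exact hasDerivAt_const 0 _
    exact hmain.2.unique this
  -- split the integral of the sum
  have hGint : ∀ i : Fin n, Integrable (fun z : Fin n → ℝ × ℝ =>
      Q z * ((∏ k ∈ univ.erase i, f k (w + (0 : ℝ) • v - z k)) *
        fderiv ℝ (f i) (w + (0 : ℝ) • v - z i) v)) volume := by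
    intro i
    have h := intTerm n Q hQcont (w + (0 : ℝ) • v) f (fun k => (hf k).continuous) hfs i
      (fun x => fderiv ℝ (f i) x v) (fderivApply_continuous (hf i) v)
      (fderivApply_hcs (hfs i) v)
    have heq : (fun z : Fin n → ℝ × ℝ =>
        Q z * ((fun x => fderiv ℝ (f i) x v) (w + (0 : ℝ) • v - z i) *
          ∏ k ∈ univ.erase i, f k (w + (0 : ℝ) • v - z k)))
        = fun z : Fin n → ℝ × ℝ =>
          Q z * ((∏ k ∈ univ.erase i, f k (w + (0 : ℝ) • v - z k)) *
            fderiv ℝ (f i) (w + (0 : ℝ) • v - z i) v) := by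
      funext z; ring
    rwa [heq] at h
  calc ∑ i, ∫ z : Fin n → ℝ × ℝ,
        Q z * (fderiv ℝ (f i) (w - z i) v * ∏ k ∈ univ.erase i, f k (w - z k))
      = ∑ i, ∫ z : Fin n → ℝ × ℝ,
        Q z * ((∏ k ∈ univ.erase i, f k (w + (0 : ℝ) • v - z k)) *
          fderiv ℝ (f i) (w + (0 : ℝ) • v - z i) v) := by
        refine Finset.sum_congr rfl fun i _ => ?_
        congr 1
        funext z
        simp only [zero_smul, add_zero]
        ring
    _ = ∫ z : Fin n → ℝ × ℝ, ∑ i,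
        Q z * ((∏ k ∈ univ.erase i, f k (w + (0 : ℝ) • v - z k)) *
          fderiv ℝ (f i) (w + (0 : ℝ) • v - z i) v) :=
        (integral_finset_sum univ fun i _ => hGint i).symm
    _ = ∫ z, F' 0 z := by
        refine congrArg _ ?_
        funext z
        rw [hF', ← Finset.mul_sum]
    _ = 0 := hzero

theorem stmt5 (n : ℕ) (hn : 1 ≤ n) (c : ℝ)
    (K : Fin n → ℝ × ℝ → ℝ)
    (hK : ∀ i, ContDiff ℝ 2 (K i)) (hKsupp : ∀ i, HasCompactSupport (K i))
    (Q : (Fin n → ℝ × ℝ) → ℝ) (M : ℝ)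
    (hQbd : ∀ z, |Q z| ≤ M) (hQcont : Continuous Q)
    (hQinv : ∀ (h : ℝ × ℝ) (z : Fin n → ℝ × ℝ), Q (fun i => z i + h) = Q z) :
    ∀ w : ℝ × ℝ,
      (∑ i, ∫ z : Fin n → ℝ × ℝ,
          Q z * (Lop c (K i) (w - z i) * ∏ k ∈ univ.erase i, K k (w - z k)))
      = c * ∑ i, ∑ j ∈ univ.erase i,
          ∫ z : Fin n → ℝ × ℝ,
            Q z * (px (K i) (w - z i) * px (K j) (w - z j)
              * ∏ k ∈ (univ.erase i).erase j, K k (w - z k)) := by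
  intro w
  classical
  have hK1 : ∀ i, ContDiff ℝ 1 (K i) := fun i => (hK i).of_le one_le_two
  have hKc : ∀ i, Continuous (K i) := fun i => (hK i).continuous
  have hpxC1 : ∀ j, ContDiff ℝ 1 (px (K j)) := fun j => fderivApply_contDiff (hK j) (0, 1)
  have hpxS : ∀ j, HasCompactSupport (px (K j)) := fun j => fderivApply_hcs (hKsupp j) (0, 1)
  -- time derivative part
  have hA : ∑ i, ∫ z : Fin n → ℝ × ℝ,
      Q z * (pt (K i) (w - z i) * ∏ k ∈ univ.erase i, K k (w - z k)) = 0 :=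
    lemA n Q M hQbd hQcont hQinv w (1, 0) K hK1 hKsupp
  -- space derivative part, for each j
  have hBj : ∀ j : Fin n,
      (∫ z : Fin n → ℝ × ℝ,
        Q z * (px (px (K j)) (w - z j) * ∏ k ∈ univ.erase j, K k (w - z k)))
      = - ∑ i ∈ univ.erase j, ∫ z : Fin n → ℝ × ℝ,
          Q z * (px (K i) (w - z i) *
            (px (K j) (w - z j) * ∏ k ∈ (univ.erase i).erase j, K k (w - z k))) := by
    intro j
    set u : Fin n → ℝ × ℝ → ℝ := Function.update K j (px (K j)) with hu
    have hub : u j = px (K j) := by rw [hu]; exact Function.update_self j _ K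
    have hun : ∀ k, k ≠ j → u k = K k := fun k hk => by
      rw [hu]; exact Function.update_of_ne hk _ K
    have hu1 : ∀ i, ContDiff ℝ 1 (u i) := by
      intro i; rcases eq_or_ne i j with rfl | h
      · rw [hub]; exact hpxC1 i
      · rw [hun i h]; exact hK1 i
    have hu2 : ∀ i, HasCompactSupport (u i) := by
      intro i; rcases eq_or_ne i j with rfl | h
      · rw [hub]; exact hpxS i
      · rw [hun i h]; exact hKsupp i
    have h0 := lemA n Q M hQbd hQcont hQinv w (0, 1) u hu1 hu2
    rw [← Finset.add_sum_erase univ _ (Finset.mem_univ j)] at h0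
    have e1 : (∫ z : Fin n → ℝ × ℝ,
        Q z * (fderiv ℝ (u j) (w - z j) (0, 1) * ∏ k ∈ univ.erase j, u k (w - z k)))
        = ∫ z : Fin n → ℝ × ℝ,
          Q z * (px (px (K j)) (w - z j) * ∏ k ∈ univ.erase j, K k (w - z k)) := by
      refine congrArg _ (funext fun z => ?_)
      have hprod : ∏ k ∈ univ.erase j, u k (w - z k) = ∏ k ∈ univ.erase j, K k (w - z k) :=
        Finset.prod_congr rfl fun k hk => by rw [hun k (Finset.mem_erase.mp hk).1]
      rw [hprod, hub]
      rfl
    have e2 : ∀ i ∈ univ.erase j, (∫ z : Fin n → ℝ × ℝ,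
        Q z * (fderiv ℝ (u i) (w - z i) (0, 1) * ∏ k ∈ univ.erase i, u k (w - z k)))
        = ∫ z : Fin n → ℝ × ℝ,
          Q z * (px (K i) (w - z i) *
            (px (K j) (w - z j) * ∏ k ∈ (univ.erase i).erase j, K k (w - z k))) := by
      intro i hi
      have hij : i ≠ j := (Finset.mem_erase.mp hi).1
      refine congrArg _ (funext fun z => ?_)
      have hjmem : j ∈ univ.erase i := Finset.mem_erase.mpr ⟨hij.symm, Finset.mem_univ j⟩
      have hsplit : ∏ k ∈ univ.erase i, u k (w - z k)
          = u j (w - z j) * ∏ k ∈ (univ.erase i).erase j, u k (w - z k) :=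
        (Finset.mul_prod_erase _ _ hjmem).symm
      have hprod2 : ∏ k ∈ (univ.erase i).erase j, u k (w - z k)
          = ∏ k ∈ (univ.erase i).erase j, K k (w - z k) :=
        Finset.prod_congr rfl fun k hk => by rw [hun k (Finset.mem_erase.mp hk).1]
      rw [hsplit, hprod2, hub, hun i hij]
      rfl
    rw [e1, Finset.sum_congr rfl e2] at h0
    linarith
  -- split the parabolic operator
  have hsplit : ∀ i : Fin n, (∫ z : Fin n → ℝ × ℝ,
      Q z * (Lop c (K i) (w - z i) * ∏ k ∈ univ.erase i, K k (w - z k)))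
      = (∫ z : Fin n → ℝ × ℝ,
          Q z * (pt (K i) (w - z i) * ∏ k ∈ univ.erase i, K k (w - z k)))
        - c * ∫ z : Fin n → ℝ × ℝ,
            Q z * (px (px (K i)) (w - z i) * ∏ k ∈ univ.erase i, K k (w - z k)) := by
    intro i
    have h1 : Integrable (fun z : Fin n → ℝ × ℝ =>
        Q z * (pt (K i) (w - z i) * ∏ k ∈ univ.erase i, K k (w - z k))) volume :=
      intTerm n Q hQcont w K hKc hKsupp i (pt (K i))
        (fderivApply_continuous (hK1 i) (1, 0)) (fderivApply_hcs (hKsupp i) (1, 0))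
    have h2 : Integrable (fun z : Fin n → ℝ × ℝ =>
        Q z * (px (px (K i)) (w - z i) * ∏ k ∈ univ.erase i, K k (w - z k))) volume :=
      intTerm n Q hQcont w K hKc hKsupp i (px (px (K i)))
        (fderivApply_continuous (hpxC1 i) (0, 1)) (fderivApply_hcs (hpxS i) (0, 1))
    have heq : (fun z : Fin n → ℝ × ℝ =>
        Q z * (Lop c (K i) (w - z i) * ∏ k ∈ univ.erase i, K k (w - z k)))
        = fun z : Fin n → ℝ × ℝ =>
          Q z * (pt (K i) (w - z i) * ∏ k ∈ univ.erase i, K k (w - z k))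
          - c * (Q z * (px (px (K i)) (w - z i) * ∏ k ∈ univ.erase i, K k (w - z k))) := by
      funext z
      simp only [Lop]
      ring
    rw [heq, integral_sub h1 (h2.const_mul c), integral_const_mul]
  calc (∑ i, ∫ z : Fin n → ℝ × ℝ,
        Q z * (Lop c (K i) (w - z i) * ∏ k ∈ univ.erase i, K k (w - z k)))
      = (∑ i, ∫ z : Fin n → ℝ × ℝ,
          Q z * (pt (K i) (w - z i) * ∏ k ∈ univ.erase i, K k (w - z k)))
        - c * ∑ i, ∫ z : Fin n → ℝ × ℝ,
            Q z * (px (px (K i)) (w - z i) * ∏ k ∈ univ.erase i, K k (w - z k)) := by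
        rw [Finset.sum_congr rfl fun i _ => hsplit i, Finset.sum_sub_distrib, ← Finset.mul_sum]
    _ = - (c * ∑ j, ∫ z : Fin n → ℝ × ℝ,
          Q z * (px (px (K j)) (w - z j) * ∏ k ∈ univ.erase j, K k (w - z k))) := by
        rw [hA]; ring
    _ = c * ∑ j, ∑ i ∈ univ.erase j, ∫ z : Fin n → ℝ × ℝ,
          Q z * (px (K i) (w - z i) *
            (px (K j) (w - z j) * ∏ k ∈ (univ.erase i).erase j, K k (w - z k))) := by
        rw [Finset.sum_congr rfl fun j _ => hBj j, Finset.sum_neg_distrib]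
        ring
    _ = c * ∑ i, ∑ j ∈ univ.erase i, ∫ z : Fin n → ℝ × ℝ,
          Q z * (px (K i) (w - z i) *
            (px (K j) (w - z j) * ∏ k ∈ (univ.erase i).erase j, K k (w - z k))) := by
        congr 1
        exact Finset.sum_comm' (by simp [Finset.mem_erase, ne_comm])
    _ = c * ∑ i, ∑ j ∈ univ.erase i, ∫ z : Fin n → ℝ × ℝ,
          Q z * (px (K i) (w - z i) * px (K j) (w - z j)
            * ∏ k ∈ (univ.erase i).erase j, K k (w - z k)) := by
        congr 1
        refine Finset.sum_congr rfl fun i _ => Finset.sum_congr rfl fun j _ => ?_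
        refine congrArg _ (funext fun z => ?_)
        ring
end

section
/- Let n ≥ 1 and c ∈ ℝ. Let (Ω, ℱ, P) be a probability space and ξ : Ω × ℝ² → ℝ a jointly measurable random field such that ξ(ω, ·) is continuous for every ω and |ξ(ω, z)| ≤ M for some constant M and all (ω, z). Assume ξ is n-point stationary: for all h, z₁,…,zₙ ∈ ℝ², E[∏_{i=1}^n ξ(z_i + h)] = E[∏_{i=1}^n ξ(z_i)]. Let K₁,…,Kₙ : ℝ² → ℝ be twice continuously differentiable with compact support, and for a kernel K write (K ∗ ξ)(w) = ∫_{ℝ²} K(w − z) ξ(z) dz. Then for every w ∈ ℝ²: E[ Σ_{i=1}^n ((L_c K_i) ∗ ξ)(w) ∏_{k≠i} (K_k ∗ ξ)(w) ] = c · E[ Σ_{i≠j} ((∂_x K_i) ∗ ξ)(w) ((∂_x K_j) ∗ ξ)(w) ∏_{k∉{i,j}} (K_k ∗ ξ)(w) ], where the second sum runs over all ordered pairs (i,j) with i ≠ j. -/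
open MeasureTheory Finset Metric
open scoped Topology

/-- Convolution `(K ∗ f)(w) = ∫ K(w − z) f(z) dz` on `ℝ × ℝ`. -/
noncomputable def conv (K f : ℝ × ℝ → ℝ) (w : ℝ × ℝ) : ℝ :=
  ∫ z : ℝ × ℝ, K (w - z) * f z

namespace Stmt8Aux

variable {n : ℕ}

lemma update_forall {P : (ℝ × ℝ → ℝ) → Prop} {H : Fin n → ℝ × ℝ → ℝ}
    (h : ∀ k, P (H k)) {i : Fin n} {f : ℝ × ℝ → ℝ} (hf : P f) :
    ∀ k, P (Function.update H i f k) := by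
  intro k
  rcases eq_or_ne k i with rfl | hk
  · rwa [Function.update_self]
  · rw [Function.update_of_ne hk]; exact h k

lemma cont_prodK {G : Fin n → ℝ × ℝ → ℝ} (hGc : ∀ i, Continuous (G i)) (w : ℝ × ℝ) :
    Continuous fun z : Fin n → ℝ × ℝ => ∏ i, G i (w - z i) :=
  continuous_finset_prod _ fun i _ => (hGc i).comp (continuous_const.sub (continuous_apply i))

lemma supp_prodK {G : Fin n → ℝ × ℝ → ℝ} (hGs : ∀ i, HasCompactSupport (G i)) (w : ℝ × ℝ) :
    HasCompactSupport fun z : Fin n → ℝ × ℝ => ∏ i, G i (w - z i) := by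
  apply HasCompactSupport.intro
    (K := Set.pi Set.univ fun i => (fun y => w - y) '' tsupport (G i))
  · exact isCompact_univ_pi fun i => (hGs i).image (continuous_const.sub continuous_id)
  · intro z hz
    rw [Set.mem_univ_pi] at hz
    push_neg at hz
    obtain ⟨i, hi⟩ := hz
    refine Finset.prod_eq_zero (mem_univ i) ?_
    apply image_eq_zero_of_notMem_tsupport
    intro hmem
    exact hi ⟨w - z i, hmem, sub_sub_cancel w (z i)⟩

lemma integrable_mul_rho {g : (Fin n → ℝ × ℝ) → ℝ} (hgc : Continuous g)
    (hgs : HasCompactSupport g) {ρ : (Fin n → ℝ × ℝ) → ℝ}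
    (hρm : AEStronglyMeasurable ρ (volume : Measure (Fin n → ℝ × ℝ))) {B : ℝ}
    (hρb : ∀ z, |ρ z| ≤ B) :
    Integrable (fun z => g z * ρ z) (volume : Measure (Fin n → ℝ × ℝ)) := by
  have h1 : Integrable (fun z => ρ z * g z) (volume : Measure (Fin n → ℝ × ℝ)) :=
    (hgc.integrable_of_hasCompactSupport hgs).bdd_mul hρm
      (Filter.Eventually.of_forall fun z => by simpa [Real.norm_eq_abs] using hρb z)
  have : (fun z => ρ z * g z) = fun z => g z * ρ z := funext fun z => mul_comm _ _
  rwa [this] at h1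

lemma A_const (w v : ℝ × ℝ) (H : Fin n → ℝ × ℝ → ℝ) {ρ : (Fin n → ℝ × ℝ) → ℝ}
    (hρstat : ∀ (h : ℝ × ℝ) (z : Fin n → ℝ × ℝ), ρ (fun i => z i + h) = ρ z) (s : ℝ) :
    ∫ z : Fin n → ℝ × ℝ, (∏ i, H i (w + s • v - z i)) * ρ z
      = ∫ z : Fin n → ℝ × ℝ, (∏ i, H i (w - z i)) * ρ z := by
  rw [← integral_add_right_eq_self
    (fun z : Fin n → ℝ × ℝ => (∏ i, H i (w + s • v - z i)) * ρ z) (fun _ => s • v)]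
  refine integral_congr_ae (Filter.Eventually.of_forall fun z => ?_)
  have h1 : ∀ i : Fin n, w + s • v - (z i + s • v) = w - z i := fun i => by abel
  have h2 : ρ (z + fun _ => s • v) = ρ z := hρstat (s • v) z
  simp only [Pi.add_apply, h1, h2]

lemma hasDerivAt_A (w v : ℝ × ℝ) {H : Fin n → ℝ × ℝ → ℝ}
    (hH : ∀ i, ContDiff ℝ 1 (H i)) (hHs : ∀ i, HasCompactSupport (H i))
    {ρ : (Fin n → ℝ × ℝ) → ℝ}
    (hρm : AEStronglyMeasurable ρ (volume : Measure (Fin n → ℝ × ℝ))) {B : ℝ}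
    (hρb : ∀ z, |ρ z| ≤ B) (s₀ : ℝ) :
    HasDerivAt (fun s : ℝ => ∫ z : Fin n → ℝ × ℝ, (∏ i, H i (w + s • v - z i)) * ρ z)
      (∫ z : Fin n → ℝ × ℝ,
        (∑ i, (∏ k ∈ univ.erase i, H k (w + s₀ • v - z k)) *
          fderiv ℝ (H i) (w + s₀ • v - z i) v) * ρ z) s₀ := by
  have hHc : ∀ i, Continuous (H i) := fun i => (hH i).continuous
  set D : Fin n → ℝ × ℝ → ℝ := fun i x => fderiv ℝ (H i) x v with hD
  have hDsupp : ∀ i, Function.support (D i) ⊆ tsupport (H i) := by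
    intro i x hx
    apply support_fderiv_subset ℝ
    intro h0
    exact hx (by simp [hD, h0])
  have hDs : ∀ i, HasCompactSupport (D i) := fun i => (hHs i).mono' (hDsupp i)
  have hDc : ∀ i, Continuous (D i) :=
    fun i => ((hH i).continuous_fderiv one_ne_zero).clm_apply continuous_const
  choose CH hCH using fun i => (hHs i).exists_bound_of_continuous (hHc i)
  choose CD hCD using fun i => (hDs i).exists_bound_of_continuous (hDc i)
  choose r hr using fun i => ((hHs i).isBounded.subset_closedBall (0 : ℝ × ℝ))
  set R : Fin n → ℝ := fun i => ‖w‖ + (|s₀| + 1) * ‖v‖ + r i with hR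
  set S : Set (Fin n → ℝ × ℝ) := Set.pi Set.univ fun i => closedBall (0 : ℝ × ℝ) (R i) with hS
  set Cb : ℝ := (∑ i, (∏ k ∈ univ.erase i, CH k) * CD i) * B with hCb
  -- key : outside S the derivative integrand vanishes
  have hout : ∀ (s : ℝ), s ∈ ball s₀ 1 → ∀ z : Fin n → ℝ × ℝ, z ∉ S →
      (∑ i, (∏ k ∈ univ.erase i, H k (w + s • v - z k)) *
        D i (w + s • v - z i)) = 0 := by
    intro s hs z hz
    rw [hS, Set.mem_univ_pi] at hz
    push_neg at hz
    obtain ⟨i, hi⟩ := hz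
    rw [mem_closedBall, dist_zero_right, not_le] at hi
    have hsb : |s| ≤ |s₀| + 1 := by
      have : |s - s₀| < 1 := by simpa [Real.dist_eq] using (mem_ball.mp hs)
      calc |s| = |s - s₀ + s₀| := by ring_nf
        _ ≤ |s - s₀| + |s₀| := abs_add_le _ _
        _ ≤ |s₀| + 1 := by linarith
    have hkey : w + s • v - z i ∉ tsupport (H i) := by
      intro hmem
      have h1 := hr i hmem
      rw [mem_closedBall, dist_zero_right] at h1
      have h2 : ‖z i‖ - ‖w + s • v‖ ≤ ‖w + s • v - z i‖ := by
        have := norm_sub_norm_le (z i) (w + s • v)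
        calc ‖z i‖ - ‖w + s • v‖ ≤ ‖z i - (w + s • v)‖ := this
          _ = ‖w + s • v - z i‖ := by rw [norm_sub_rev]
      have h3 : ‖w + s • v‖ ≤ ‖w‖ + (|s₀| + 1) * ‖v‖ := by
        calc ‖w + s • v‖ ≤ ‖w‖ + ‖s • v‖ := norm_add_le _ _
          _ = ‖w‖ + |s| * ‖v‖ := by rw [norm_smul, Real.norm_eq_abs]
          _ ≤ ‖w‖ + (|s₀| + 1) * ‖v‖ := by
              have := mul_le_mul_of_nonneg_right hsb (norm_nonneg v)
              linarith
      rw [hR] at hi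
      simp only at hi
      linarith
    refine Finset.sum_eq_zero fun j _ => ?_
    rcases eq_or_ne j i with rfl | hji
    · have : D j (w + s • v - z j) = 0 := by
        by_contra h0
        exact hkey (hDsupp j h0)
      rw [this, mul_zero]
    · have hij : i ∈ univ.erase j := Finset.mem_erase.mpr ⟨Ne.symm hji, mem_univ i⟩
      have hzero : H i (w + s • v - z i) = 0 := image_eq_zero_of_notMem_tsupport hkey
      rw [Finset.prod_eq_zero hij hzero, zero_mul]
  -- apply dominated derivative theorem
  have main := hasDerivAt_integral_of_dominated_loc_of_deriv_le
    (F := fun s (z : Fin n → ℝ × ℝ) => (∏ i, H i (w + s • v - z i)) * ρ z)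
    (F' := fun s (z : Fin n → ℝ × ℝ) =>
      (∑ i, (∏ k ∈ univ.erase i, H k (w + s • v - z k)) * D i (w + s • v - z i)) * ρ z)
    (bound := S.indicator fun _ => Cb)
    (ball_mem_nhds s₀ one_pos)
    (Filter.Eventually.of_forall fun s =>
      ((cont_prodK hHc (w + s • v)).aestronglyMeasurable.mul hρm))
    (integrable_mul_rho (cont_prodK hHc (w + s₀ • v)) (supp_prodK hHs (w + s₀ • v)) hρm hρb)
    ?_ ?_ ?_ ?_
  · exact main.2
  · -- measurability of F' s₀
    refine (Continuous.aestronglyMeasurable ?_).mul hρm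
    refine continuous_finset_sum _ fun i _ => ?_
    exact ((continuous_finset_prod _ fun k _ =>
        (hHc k).comp (continuous_const.sub (continuous_apply k))).mul
      ((hDc i).comp (continuous_const.sub (continuous_apply i))))
  · -- bound
    refine Filter.Eventually.of_forall fun z => fun s hs => ?_
    by_cases hzS : z ∈ S
    · rw [Set.indicator_of_mem hzS]
      rw [Real.norm_eq_abs, abs_mul, hCb]
      have h1 : |∑ i, (∏ k ∈ univ.erase i, H k (w + s • v - z k)) * D i (w + s • v - z i)|
          ≤ ∑ i, (∏ k ∈ univ.erase i, CH k) * CD i := by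
        refine (Finset.abs_sum_le_sum_abs _ _).trans ?_
        refine Finset.sum_le_sum fun i _ => ?_
        rw [abs_mul]
        refine mul_le_mul ?_ ?_ (abs_nonneg _) ?_
        · refine (Finset.abs_prod _ _).le.trans ?_
          refine Finset.prod_le_prod (fun k _ => abs_nonneg _) fun k _ => ?_
          simpa [Real.norm_eq_abs] using hCH k (w + s • v - z k)
        · simpa [Real.norm_eq_abs] using hCD i (w + s • v - z i)
        · exact Finset.prod_nonneg fun k _ =>
            le_trans (abs_nonneg _) (by simpa [Real.norm_eq_abs] using hCH k 0)
      refine mul_le_mul h1 (hρb z) (abs_nonneg _) ?_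
      refine Finset.sum_nonneg fun i _ => mul_nonneg ?_ ?_
      · exact Finset.prod_nonneg fun k _ =>
          le_trans (abs_nonneg _) (by simpa [Real.norm_eq_abs] using hCH k 0)
      · exact le_trans (norm_nonneg _) (hCD i 0)
    · simp only [Set.indicator_of_notMem hzS, hout s hs z hzS, zero_mul, norm_zero, le_refl]
  · -- bound integrable
    have hSm : MeasurableSet S := MeasurableSet.univ_pi fun i => measurableSet_closedBall
    rw [integrable_indicator_iff hSm]
    refine (integrableOn_const_iff (C := Cb)).mpr (Or.inr ?_)
    exact (isCompact_univ_pi fun i => isCompact_closedBall _ _).measure_lt_top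
  · -- differentiability
    refine Filter.Eventually.of_forall fun z => fun s hs => ?_
    have hfac : ∀ i : Fin n, HasDerivAt (fun s : ℝ => H i (w + s • v - z i))
        (D i (w + s • v - z i)) s := by
      intro i
      have hline : HasDerivAt (fun s : ℝ => w + s • v - z i) v s := by
        simpa using (((hasDerivAt_id s).smul_const v).const_add w).sub_const (z i)
      exact ((hH i).differentiable one_ne_zero _).hasFDerivAt.comp_hasDerivAt s hline
    have hprod := HasDerivAt.finset_prod (u := univ)
      (f := fun i (s : ℝ) => H i (w + s • v - z i))
      (f' := fun i => D i (w + s • v - z i)) (fun i _ => hfac i)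
    have := hprod.mul_const (ρ z)
    simpa [smul_eq_mul] using this
lemma Dv_cont {f : ℝ × ℝ → ℝ} (hf : ContDiff ℝ 1 f) (v : ℝ × ℝ) :
    Continuous fun x => fderiv ℝ f x v :=
  (hf.continuous_fderiv one_ne_zero).clm_apply continuous_const

lemma Dv_supp {f : ℝ × ℝ → ℝ} (hfs : HasCompactSupport f) (v : ℝ × ℝ) :
    HasCompactSupport fun x => fderiv ℝ f x v := by
  refine hfs.mono' ?_
  intro x hx
  apply support_fderiv_subset ℝ
  intro h0
  exact hx (by simp [h0])

/-- The basic integral functional. -/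
noncomputable def Ik (w : ℝ × ℝ) (ρ : (Fin n → ℝ × ℝ) → ℝ) (H : Fin n → ℝ × ℝ → ℝ) : ℝ :=
  ∫ z : Fin n → ℝ × ℝ, (∏ k, H k (w - z k)) * ρ z

lemma sum_Ik_update_eq_zero (w v : ℝ × ℝ) {H : Fin n → ℝ × ℝ → ℝ}
    (hH : ∀ i, ContDiff ℝ 1 (H i)) (hHs : ∀ i, HasCompactSupport (H i))
    {ρ : (Fin n → ℝ × ℝ) → ℝ}
    (hρm : AEStronglyMeasurable ρ (volume : Measure (Fin n → ℝ × ℝ))) {B : ℝ}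
    (hρb : ∀ z, |ρ z| ≤ B)
    (hρstat : ∀ (h : ℝ × ℝ) (z : Fin n → ℝ × ℝ), ρ (fun i => z i + h) = ρ z) :
    ∑ j, Ik w ρ (Function.update H j (fun x => fderiv ℝ (H j) x v)) = 0 := by
  have hHc : ∀ i, Continuous (H i) := fun i => (hH i).continuous
  set Dv : Fin n → ℝ × ℝ → ℝ := fun j x => fderiv ℝ (H j) x v with hDv
  -- the function A is constant, so its derivative vanishes
  have hAconst : (fun s : ℝ => ∫ z : Fin n → ℝ × ℝ, (∏ i, H i (w + s • v - z i)) * ρ z)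
      = fun _ => ∫ z : Fin n → ℝ × ℝ, (∏ i, H i (w - z i)) * ρ z :=
    funext fun s => A_const w v H hρstat s
  have hder := hasDerivAt_A w v hH hHs hρm hρb 0
  have hzero : HasDerivAt
      (fun s : ℝ => ∫ z : Fin n → ℝ × ℝ, (∏ i, H i (w + s • v - z i)) * ρ z) 0 0 := by
    rw [hAconst]; exact hasDerivAt_const 0 _
  have hD0 := hder.unique hzero
  simp only [zero_smul, add_zero] at hD0
  -- rewrite each summand
  have hpt : ∀ (j : Fin n) (z : Fin n → ℝ × ℝ),
      (∏ k, Function.update H j (Dv j) k (w - z k))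
        = (∏ k ∈ univ.erase j, H k (w - z k)) * Dv j (w - z j) := by
    intro j z
    rw [← Finset.mul_prod_erase univ _ (mem_univ j), Function.update_self]
    rw [Finset.prod_congr rfl
      (fun k hk => by rw [Function.update_of_ne (Finset.ne_of_mem_erase hk)])]
    ring
  have hint : ∀ j : Fin n, Integrable
      (fun z : Fin n → ℝ × ℝ =>
        ((∏ k ∈ univ.erase j, H k (w - z k)) * Dv j (w - z j)) * ρ z)
      (volume : Measure (Fin n → ℝ × ℝ)) := by
    intro j
    have hc : ∀ k, Continuous (Function.update H j (Dv j) k) :=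
      update_forall hHc (Dv_cont (hH j) v)
    have hs : ∀ k, HasCompactSupport (Function.update H j (Dv j) k) :=
      update_forall hHs (Dv_supp (hHs j) v)
    have := integrable_mul_rho (cont_prodK hc w) (supp_prodK hs w) hρm hρb
    refine this.congr ?_
    exact Filter.Eventually.of_forall fun z => by simp only [hpt j z]
  calc ∑ j, Ik w ρ (Function.update H j (Dv j))
      = ∑ j, ∫ z : Fin n → ℝ × ℝ,
          ((∏ k ∈ univ.erase j, H k (w - z k)) * Dv j (w - z j)) * ρ z := by
        refine Finset.sum_congr rfl fun j _ => ?_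
        unfold Ik
        exact integral_congr_ae (Filter.Eventually.of_forall fun z => by simp only [hpt j z])
    _ = ∫ z : Fin n → ℝ × ℝ, ∑ j,
          ((∏ k ∈ univ.erase j, H k (w - z k)) * Dv j (w - z j)) * ρ z :=
        (integral_finset_sum univ fun j _ => hint j).symm
    _ = ∫ z : Fin n → ℝ × ℝ,
          (∑ j, (∏ k ∈ univ.erase j, H k (w - z k)) * fderiv ℝ (H j) (w - z j) v) * ρ z :=
        integral_congr_ae (Filter.Eventually.of_forall fun z => by
          simp only [hDv, Finset.sum_mul])
    _ = 0 := hD0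
lemma contK1 {G : ℝ × ℝ → ℝ} (hGc : Continuous G) (w : ℝ × ℝ) :
    Continuous fun z : ℝ × ℝ => G (w - z) :=
  hGc.comp (continuous_const.sub continuous_id)

lemma suppK1 {G : ℝ × ℝ → ℝ} (hGs : HasCompactSupport G) (w : ℝ × ℝ) :
    HasCompactSupport fun z : ℝ × ℝ => G (w - z) := by
  apply HasCompactSupport.intro (K := (fun y => w - y) '' tsupport G)
  · exact hGs.image (continuous_const.sub continuous_id)
  · intro z hz
    apply image_eq_zero_of_notMem_tsupport
    intro hmem
    exact hz ⟨w - z, hmem, sub_sub_cancel w z⟩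

section Prob

variable {Ω : Type*} [MeasurableSpace Ω] {P : Measure Ω} [IsProbabilityMeasure P]
  {ξ : Ω → ℝ × ℝ → ℝ}

lemma conv_measurable (hmeas : Measurable (Function.uncurry ξ))
    {G : ℝ × ℝ → ℝ} (hGc : Continuous G) (w : ℝ × ℝ) :
    Measurable fun ω => conv G (ξ ω) w := by
  have h1 : StronglyMeasurable fun p : Ω × (ℝ × ℝ) => G (w - p.2) * ξ p.1 p.2 :=
    ((hGc.measurable.comp (measurable_const.sub measurable_snd)).mul hmeas).stronglyMeasurable
  exact h1.integral_prod_right'.measurable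

lemma conv_abs_le (hcont : ∀ ω, Continuous (ξ ω)) {M' : ℝ} (hbd' : ∀ ω z, |ξ ω z| ≤ M')
    {G : ℝ × ℝ → ℝ} (hGc : Continuous G) (hGs : HasCompactSupport G) (w : ℝ × ℝ) (ω : Ω) :
    |conv G (ξ ω) w| ≤ (∫ z : ℝ × ℝ, |G (w - z)|) * M' := by
  have hint : Integrable (fun z : ℝ × ℝ => G (w - z) * ξ ω z) :=
    ((contK1 hGc w).mul (hcont ω)).integrable_of_hasCompactSupport ((suppK1 hGs w).mul_right)
  have habs : Integrable (fun z : ℝ × ℝ => |G (w - z)|) :=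
    (contK1 hGc w).abs.integrable_of_hasCompactSupport (suppK1 hGs w).abs
  calc |conv G (ξ ω) w| = ‖∫ z : ℝ × ℝ, G (w - z) * ξ ω z‖ := by rw [Real.norm_eq_abs]; rfl
    _ ≤ ∫ z : ℝ × ℝ, ‖G (w - z) * ξ ω z‖ := norm_integral_le_integral_norm _
    _ ≤ ∫ z : ℝ × ℝ, |G (w - z)| * M' := by
        refine integral_mono hint.norm (habs.mul_const M') fun z => ?_
        rw [Real.norm_eq_abs, abs_mul]
        exact mul_le_mul_of_nonneg_left (hbd' ω z) (abs_nonneg _)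
    _ = (∫ z : ℝ × ℝ, |G (w - z)|) * M' := integral_mul_const _ _

lemma integrable_prod_conv (hmeas : Measurable (Function.uncurry ξ))
    (hcont : ∀ ω, Continuous (ξ ω)) {M' : ℝ} (hbd' : ∀ ω z, |ξ ω z| ≤ M')
    {G : Fin n → ℝ × ℝ → ℝ} (hGc : ∀ i, Continuous (G i))
    (hGs : ∀ i, HasCompactSupport (G i)) (w : ℝ × ℝ) :
    Integrable (fun ω => ∏ i, conv (G i) (ξ ω) w) P := by
  refine Integrable.mono' (integrable_const (∏ i, (∫ z : ℝ × ℝ, |G i (w - z)|) * M'))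
    ((Finset.measurable_prod univ fun i _ =>
      conv_measurable hmeas (hGc i) w).aestronglyMeasurable) ?_
  refine Filter.Eventually.of_forall fun ω => ?_
  rw [Real.norm_eq_abs, Finset.abs_prod]
  exact Finset.prod_le_prod (fun i _ => abs_nonneg _) fun i _ =>
    conv_abs_le hcont hbd' (hGc i) (hGs i) w ω

lemma fub (hmeas : Measurable (Function.uncurry ξ)) (hcont : ∀ ω, Continuous (ξ ω))
    {M' : ℝ} (hbd' : ∀ ω z, |ξ ω z| ≤ M')
    {G : Fin n → ℝ × ℝ → ℝ} (hGc : ∀ i, Continuous (G i))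
    (hGs : ∀ i, HasCompactSupport (G i)) (w : ℝ × ℝ) :
    ∫ ω, ∏ i, conv (G i) (ξ ω) w ∂P
      = ∫ z : Fin n → ℝ × ℝ, (∏ i, G i (w - z i)) * (∫ ω, ∏ i, ξ ω (z i) ∂P) := by
  have hM0 : 0 ≤ M' := by
    have hne : Nonempty Ω := by
      by_contra h
      rw [not_nonempty_iff] at h
      have h1 : (Set.univ : Set Ω) = ∅ := Set.eq_empty_of_isEmpty _
      have h2 : P Set.univ = 1 := measure_univ
      rw [h1, measure_empty] at h2
      exact zero_ne_one h2
    obtain ⟨ω₀⟩ := hne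
    exact le_trans (abs_nonneg _) (hbd' ω₀ 0)
  -- pointwise: product of convolutions as an integral over the pi space
  have hpt : ∀ ω, ∏ i, conv (G i) (ξ ω) w
      = ∫ z : Fin n → ℝ × ℝ, ∏ i, (G i (w - z i) * ξ ω (z i)) := by
    intro ω
    rw [integral_fintype_prod_volume_eq_prod (fun i y => G i (w - y) * ξ ω y)]
    rfl
  simp only [hpt]
  -- Fubini
  have hInt : Integrable (Function.uncurry fun ω (z : Fin n → ℝ × ℝ) =>
      ∏ i, (G i (w - z i) * ξ ω (z i))) (P.prod volume) := by
    have hm : AEStronglyMeasurable (Function.uncurry fun ω (z : Fin n → ℝ × ℝ) =>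
        ∏ i, (G i (w - z i) * ξ ω (z i))) (P.prod volume) := by
      refine (Finset.measurable_prod univ fun i _ => ?_).aestronglyMeasurable
      exact ((hGc i).measurable.comp
          ((measurable_const.sub (measurable_pi_apply i)).comp measurable_snd)).mul
        (hmeas.comp (measurable_fst.prodMk ((measurable_pi_apply i).comp measurable_snd)))
    have hgbd := Integrable.mul_prod (μ := P) (ν := (volume : Measure (Fin n → ℝ × ℝ)))
      (f := fun _ : Ω => (1:ℝ))
      (g := fun z : Fin n → ℝ × ℝ => M' ^ n * ∏ i, |G i (w - z i)|)
      (integrable_const 1)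
      (((cont_prodK (fun i => (hGc i).abs) w).integrable_of_hasCompactSupport
        (supp_prodK (fun i => (hGs i).abs) w)).const_mul _)
    refine Integrable.mono' hgbd hm ?_
    refine Filter.Eventually.of_forall fun p => ?_
    simp only [Function.uncurry, Real.norm_eq_abs, one_mul, Finset.abs_prod]
    calc ∏ i, |G i (w - p.2 i) * ξ p.1 (p.2 i)|
        ≤ ∏ i, |G i (w - p.2 i)| * M' := by
          refine Finset.prod_le_prod (fun i _ => abs_nonneg _) fun i _ => ?_
          rw [abs_mul]
          exact mul_le_mul_of_nonneg_left (hbd' p.1 (p.2 i)) (abs_nonneg _)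
      _ = (∏ i, |G i (w - p.2 i)|) * M' ^ n := by
          rw [Finset.prod_mul_distrib, Finset.prod_const, Finset.card_univ, Fintype.card_fin]
      _ = M' ^ n * ∏ i, |G i (w - p.2 i)| := mul_comm _ _
  rw [integral_integral_swap hInt]
  refine integral_congr_ae (Filter.Eventually.of_forall fun z => ?_)
  simp only [Finset.prod_mul_distrib]
  rw [integral_const_mul]

end Prob
lemma erase_erase_comm {m : ℕ} (i j : Fin m) :
    ((univ : Finset (Fin m)).erase j).erase i = (univ.erase i).erase j := by
  ext k
  simp only [Finset.mem_erase, Finset.mem_univ, and_true]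
  tauto

lemma prod_conv_update (H : Fin n → ℝ × ℝ → ℝ) (i : Fin n) (f : ℝ × ℝ → ℝ)
    (g : ℝ × ℝ → ℝ) (w : ℝ × ℝ) :
    ∏ k, conv (Function.update H i f k) g w
      = conv f g w * ∏ k ∈ univ.erase i, conv (H k) g w := by
  rw [← Finset.mul_prod_erase univ (fun k => conv (Function.update H i f k) g w)
    (mem_univ i), Function.update_self]
  exact congrArg _ (Finset.prod_congr rfl fun k hk => by
    rw [Function.update_of_ne (ne_of_mem_erase hk)])

lemma Ik_update_sub (w : ℝ × ℝ) {ρ : (Fin n → ℝ × ℝ) → ℝ}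
    (hρm : AEStronglyMeasurable ρ (volume : Measure (Fin n → ℝ × ℝ))) {B : ℝ}
    (hρb : ∀ z, |ρ z| ≤ B)
    {H : Fin n → ℝ × ℝ → ℝ} (hHc : ∀ k, Continuous (H k))
    (hHs : ∀ k, HasCompactSupport (H k))
    (i : Fin n) {f g : ℝ × ℝ → ℝ} (hfc : Continuous f) (hfs : HasCompactSupport f)
    (hgc : Continuous g) (hgs : HasCompactSupport g) (c : ℝ) :
    Ik w ρ (Function.update H i (fun x => f x - c * g x))
      = Ik w ρ (Function.update H i f) - c * Ik w ρ (Function.update H i g) := by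
  have hif := integrable_mul_rho (cont_prodK (update_forall (i := i) hHc hfc) w)
    (supp_prodK (update_forall (i := i) hHs hfs) w) hρm hρb
  have hig := integrable_mul_rho (cont_prodK (update_forall (i := i) hHc hgc) w)
    (supp_prodK (update_forall (i := i) hHs hgs) w) hρm hρb
  unfold Ik
  rw [← integral_const_mul, ← integral_sub hif (hig.const_mul c)]
  refine integral_congr_ae (Filter.Eventually.of_forall fun z => ?_)
  have e : ∀ q : ℝ × ℝ → ℝ, (∏ k, Function.update H i q k (w - z k))
      = q (w - z i) * ∏ k ∈ univ.erase i, H k (w - z k) := by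
    intro q
    rw [← Finset.mul_prod_erase univ _ (mem_univ i), Function.update_self]
    exact congrArg _ (Finset.prod_congr rfl fun k hk => by
      rw [Function.update_of_ne (ne_of_mem_erase hk)])
  simp only [e]
  ring
end Stmt8Aux

open Stmt8Aux in
theorem stmt8 (n : ℕ) (hn : 1 ≤ n) (c : ℝ)
    {Ω : Type*} [MeasurableSpace Ω] (P : Measure Ω) [IsProbabilityMeasure P]
    (ξ : Ω → ℝ × ℝ → ℝ) (hmeas : Measurable (Function.uncurry ξ))
    (hcont : ∀ ω, Continuous (ξ ω))
    (M : ℝ) (hbd : ∀ ω z, |ξ ω z| ≤ M)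
    (hstat : ∀ (h : ℝ × ℝ) (z : Fin n → ℝ × ℝ),
      (∫ ω, ∏ i, ξ ω (z i + h) ∂P) = ∫ ω, ∏ i, ξ ω (z i) ∂P)
    (K : Fin n → ℝ × ℝ → ℝ)
    (hK : ∀ i, ContDiff ℝ 2 (K i)) (hKsupp : ∀ i, HasCompactSupport (K i)) :
    ∀ w : ℝ × ℝ,
      (∫ ω, ∑ i, conv (Lop c (K i)) (ξ ω) w
          * ∏ k ∈ univ.erase i, conv (K k) (ξ ω) w ∂P)
      = c * ∫ ω, ∑ i, ∑ j ∈ univ.erase i,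
          conv (px (K i)) (ξ ω) w * conv (px (K j)) (ξ ω) w
            * ∏ k ∈ (univ.erase i).erase j, conv (K k) (ξ ω) w ∂P := by
  intro w
  classical
  have hbd' : ∀ ω z, |ξ ω z| ≤ |M| := fun ω z => (hbd ω z).trans (le_abs_self M)
  set ρ : (Fin n → ℝ × ℝ) → ℝ := fun z => ∫ ω, ∏ i, ξ ω (z i) ∂P with hρdef
  have hρm : AEStronglyMeasurable ρ (volume : Measure (Fin n → ℝ × ℝ)) := by
    have h1 : StronglyMeasurable fun p : (Fin n → ℝ × ℝ) × Ω => ∏ i, ξ p.2 (p.1 i) :=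
      (Finset.measurable_prod univ fun i _ =>
        hmeas.comp (measurable_snd.prodMk
          ((measurable_pi_apply i).comp measurable_fst))).stronglyMeasurable
    exact h1.integral_prod_right'.aestronglyMeasurable
  have hρb : ∀ z, |ρ z| ≤ |M| ^ n := by
    intro z
    have h1 : ∀ ω, ‖∏ i, ξ ω (z i)‖ ≤ |M| ^ n := by
      intro ω
      rw [Real.norm_eq_abs, Finset.abs_prod]
      calc ∏ i, |ξ ω (z i)| ≤ ∏ _i : Fin n, |M| :=
            Finset.prod_le_prod (fun i _ => abs_nonneg _) fun i _ => hbd' ω (z i)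
        _ = |M| ^ n := by rw [Finset.prod_const, Finset.card_univ, Fintype.card_fin]
    calc |ρ z| = ‖∫ ω, ∏ i, ξ ω (z i) ∂P‖ := by rw [Real.norm_eq_abs]
      _ ≤ |M| ^ n * (P Set.univ).toReal :=
          norm_integral_le_of_norm_le_const (Filter.Eventually.of_forall h1)
      _ = |M| ^ n := by rw [measure_univ, ENNReal.toReal_one, mul_one]
  have hρstat : ∀ (h : ℝ × ℝ) (z : Fin n → ℝ × ℝ), ρ (fun i => z i + h) = ρ z :=
    fun h z => hstat h z
  -- kernel facts
  have hKc : ∀ i, Continuous (K i) := fun i => (hK i).continuous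
  have hK1 : ∀ i, ContDiff ℝ 1 (K i) := fun i => (hK i).of_le (by norm_num)
  have hptc : ∀ i, Continuous (pt (K i)) := fun i => Dv_cont (hK1 i) _
  have hpts : ∀ i, HasCompactSupport (pt (K i)) := fun i => Dv_supp (hKsupp i) _
  have hpxc : ∀ i, Continuous (px (K i)) := fun i => Dv_cont (hK1 i) _
  have hpxs : ∀ i, HasCompactSupport (px (K i)) := fun i => Dv_supp (hKsupp i) _
  have hpx1 : ∀ i, ContDiff ℝ 1 (px (K i)) := fun i =>
    ((hK i).fderiv_right (by norm_num)).clm_apply contDiff_const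
  have hpxpxc : ∀ i, Continuous (px (px (K i))) := fun i => Dv_cont (hpx1 i) _
  have hpxpxs : ∀ i, HasCompactSupport (px (px (K i))) := fun i => Dv_supp (hpxs i) _
  have hLc : ∀ i, Continuous (Lop c (K i)) := fun i =>
    (hptc i).sub (continuous_const.mul (hpxpxc i))
  have hLs : ∀ i, HasCompactSupport (Lop c (K i)) := by
    intro i
    apply HasCompactSupport.intro ((hpts i).union (hpxpxs i))
    intro x hx
    rw [Set.mem_union] at hx
    push_neg at hx
    show pt (K i) x - c * px (px (K i)) x = 0
    rw [image_eq_zero_of_notMem_tsupport hx.1, image_eq_zero_of_notMem_tsupport hx.2,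
      mul_zero, sub_zero]
  -- the two main identities coming from stationarity
  have Hid1 : ∑ j, Ik w ρ (Function.update K j (pt (K j))) = 0 :=
    sum_Ik_update_eq_zero w ((1:ℝ), (0:ℝ)) hK1 hKsupp hρm hρb hρstat
  have Hid2 : ∀ i : Fin n, Ik w ρ (Function.update K i (px (px (K i))))
      = - ∑ j ∈ univ.erase i, Ik w ρ
          (Function.update (Function.update K i (px (K i))) j (px (K j))) := by
    intro i
    have h0 := sum_Ik_update_eq_zero w ((0:ℝ), (1:ℝ))
      (update_forall (i := i) hK1 (hpx1 i)) (update_forall (i := i) hKsupp (hpxs i))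
      hρm hρb hρstat
    set F : Fin n → ℝ := fun j => Ik w ρ (Function.update (Function.update K i (px (K i))) j
      (fun x => fderiv ℝ (Function.update K i (px (K i)) j) x ((0:ℝ), (1:ℝ)))) with hF
    have hsplit : ∑ j, F j = F i + ∑ j ∈ univ.erase i, F j :=
      (Finset.add_sum_erase univ F (mem_univ i)).symm
    have hFi : F i = Ik w ρ (Function.update K i (px (px (K i)))) := by
      rw [hF]
      simp only [Function.update_self, Function.update_idem]
      rfl
    have hFrest : ∑ j ∈ univ.erase i, F j = ∑ j ∈ univ.erase i, Ik w ρ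
        (Function.update (Function.update K i (px (K i))) j (px (K j))) := by
      refine Finset.sum_congr rfl fun j hj => ?_
      rw [hF]
      simp only [Function.update_of_ne (ne_of_mem_erase hj)]
      rfl
    rw [hsplit, hFi, hFrest] at h0
    linarith
  -- rewrite LHS
  have hLHS : (∫ ω, ∑ i, conv (Lop c (K i)) (ξ ω) w
        * ∏ k ∈ univ.erase i, conv (K k) (ξ ω) w ∂P)
      = ∑ i, Ik w ρ (Function.update K i (Lop c (K i))) := by
    have e1 : ∀ ω : Ω, (∑ i, conv (Lop c (K i)) (ξ ω) w
          * ∏ k ∈ univ.erase i, conv (K k) (ξ ω) w)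
        = ∑ i, ∏ k, conv (Function.update K i (Lop c (K i)) k) (ξ ω) w :=
      fun ω => Finset.sum_congr rfl fun i _ =>
        (prod_conv_update K i (Lop c (K i)) (ξ ω) w).symm
    have h1 : (∫ ω, ∑ i, conv (Lop c (K i)) (ξ ω) w
          * ∏ k ∈ univ.erase i, conv (K k) (ξ ω) w ∂P)
        = ∫ ω, ∑ i, ∏ k, conv (Function.update K i (Lop c (K i)) k) (ξ ω) w ∂P :=
      integral_congr_ae (Filter.Eventually.of_forall e1)
    rw [h1, integral_finset_sum univ fun i _ => integrable_prod_conv hmeas hcont hbd'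
      (update_forall (i := i) hKc (hLc i)) (update_forall (i := i) hKsupp (hLs i)) w]
    refine Finset.sum_congr rfl fun i _ => ?_
    rw [fub hmeas hcont hbd' (update_forall (i := i) hKc (hLc i))
      (update_forall (i := i) hKsupp (hLs i)) w]
    simp only [Ik, hρdef]
  -- rewrite RHS
  have hRHS : (∫ ω, ∑ i, ∑ j ∈ univ.erase i,
        conv (px (K i)) (ξ ω) w * conv (px (K j)) (ξ ω) w
          * ∏ k ∈ (univ.erase i).erase j, conv (K k) (ξ ω) w ∂P)
      = ∑ i, ∑ j ∈ univ.erase i, Ik w ρ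
          (Function.update (Function.update K i (px (K i))) j (px (K j))) := by
    have e1 : ∀ (ω : Ω) (i : Fin n), ∀ j ∈ univ.erase i,
        conv (px (K i)) (ξ ω) w * conv (px (K j)) (ξ ω) w
          * ∏ k ∈ (univ.erase i).erase j, conv (K k) (ξ ω) w
        = ∏ k, conv (Function.update (Function.update K i (px (K i))) j (px (K j)) k)
            (ξ ω) w := by
      intro ω i j hj
      have hji : j ≠ i := ne_of_mem_erase hj
      have hij : i ∈ univ.erase j := Finset.mem_erase.mpr ⟨Ne.symm hji, mem_univ i⟩
      rw [prod_conv_update]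
      rw [← Finset.mul_prod_erase (univ.erase j)
        (fun k => conv (Function.update K i (px (K i)) k) (ξ ω) w) hij,
        Function.update_self]
      have e2 : ∏ k ∈ (univ.erase j).erase i,
          conv (Function.update K i (px (K i)) k) (ξ ω) w
          = ∏ k ∈ (univ.erase i).erase j, conv (K k) (ξ ω) w := by
        rw [erase_erase_comm]
        refine Finset.prod_congr rfl fun k hk => ?_
        rw [Function.update_of_ne (ne_of_mem_erase (Finset.mem_of_mem_erase hk))]
      rw [e2]
      ring
    have e1' : ∀ ω : Ω, (∑ i, ∑ j ∈ univ.erase i,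
          conv (px (K i)) (ξ ω) w * conv (px (K j)) (ξ ω) w
            * ∏ k ∈ (univ.erase i).erase j, conv (K k) (ξ ω) w)
        = ∑ i, ∑ j ∈ univ.erase i, ∏ k,
            conv (Function.update (Function.update K i (px (K i))) j (px (K j)) k) (ξ ω) w :=
      fun ω => Finset.sum_congr rfl fun i _ => Finset.sum_congr rfl fun j hj => e1 ω i j hj
    have h1 : (∫ ω, ∑ i, ∑ j ∈ univ.erase i,
          conv (px (K i)) (ξ ω) w * conv (px (K j)) (ξ ω) w
            * ∏ k ∈ (univ.erase i).erase j, conv (K k) (ξ ω) w ∂P)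
        = ∫ ω, ∑ i, ∑ j ∈ univ.erase i, ∏ k,
            conv (Function.update (Function.update K i (px (K i))) j (px (K j)) k) (ξ ω) w ∂P :=
      integral_congr_ae (Filter.Eventually.of_forall e1')
    rw [h1, integral_finset_sum univ fun i _ => integrable_finset_sum _ fun j hj =>
      integrable_prod_conv hmeas hcont hbd'
        (update_forall (i := j) (update_forall (i := i) hKc (hpxc i)) (hpxc j))
        (update_forall (i := j) (update_forall (i := i) hKsupp (hpxs i)) (hpxs j)) w]
    refine Finset.sum_congr rfl fun i _ => ?_
    rw [integral_finset_sum (univ.erase i) fun j hj =>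
      integrable_prod_conv hmeas hcont hbd'
        (update_forall (i := j) (update_forall (i := i) hKc (hpxc i)) (hpxc j))
        (update_forall (i := j) (update_forall (i := i) hKsupp (hpxs i)) (hpxs j)) w]
    refine Finset.sum_congr rfl fun j hj => ?_
    rw [fub hmeas hcont hbd'
      (update_forall (i := j) (update_forall (i := i) hKc (hpxc i)) (hpxc j))
      (update_forall (i := j) (update_forall (i := i) hKsupp (hpxs i)) (hpxs j)) w]
    simp only [Ik, hρdef]
  rw [hLHS, hRHS]
  have hsub : ∀ i : Fin n, Ik w ρ (Function.update K i (Lop c (K i)))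
      = Ik w ρ (Function.update K i (pt (K i)))
        - c * Ik w ρ (Function.update K i (px (px (K i)))) := fun i =>
    Ik_update_sub w hρm hρb hKc hKsupp i (hptc i) (hpts i) (hpxpxc i) (hpxpxs i) c
  calc ∑ i, Ik w ρ (Function.update K i (Lop c (K i)))
      = ∑ i, (Ik w ρ (Function.update K i (pt (K i)))
          - c * Ik w ρ (Function.update K i (px (px (K i))))) :=
        Finset.sum_congr rfl fun i _ => hsub i
    _ = (∑ i, Ik w ρ (Function.update K i (pt (K i))))
          - c * ∑ i, Ik w ρ (Function.update K i (px (px (K i)))) := by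
        rw [Finset.sum_sub_distrib, Finset.mul_sum]
    _ = - (c * ∑ i, Ik w ρ (Function.update K i (px (px (K i))))) := by
        rw [Hid1, zero_sub]
    _ = - (c * ∑ i, - ∑ j ∈ univ.erase i, Ik w ρ
          (Function.update (Function.update K i (px (K i))) j (px (K j)))) := by
        rw [Finset.sum_congr rfl fun i _ => Hid2 i]
    _ = c * ∑ i, ∑ j ∈ univ.erase i, Ik w ρ
          (Function.update (Function.update K i (px (K i))) j (px (K j))) := by
        rw [Finset.sum_neg_distrib]
        ring
end

section
/- Let n ≥ 1 and c ∈ ℝ. Let (Ω, ℱ, P) be a probability space and ξ : Ω × ℝ² → ℝ a jointly measurable random field such that ξ(ω, ·) is continuous for every ω and |ξ(ω, z)| ≤ M for some constant M and all (ω, z). Assume ξ is (n+1)-point stationary: for all h, z₀,…,zₙ ∈ ℝ², E[∏_{i=0}^n ξ(z_i + h)] = E[∏_{i=0}^n ξ(z_i)]. Let K₀, K₁,…,Kₙ : ℝ² → ℝ be twice continuously differentiable with compact support; for a kernel K write (K ∗ ξ)(w) = ∫_{ℝ²} K(w − z) ξ(z) dz and Ǩ(z) = K(−z). Then for every w ∈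 ℝ²: E[ (Ǩ₀ ∗ ξ)(w) · ( Σ_{i=1}^n ((L_c K_i) ∗ ξ)(w) ∏_{k≠i} (K_k ∗ ξ)(w) − c Σ_{i≠j} ((∂_x K_i) ∗ ξ)(w) ((∂_x K_j) ∗ ξ)(w) ∏_{k∉{i,j}} (K_k ∗ ξ)(w) ) ] = E[ ((L_c K₀)ˇ ∗ ξ)(w) · ∏_{k=1}^n (K_k ∗ ξ)(w) ], where (L_c K₀)ˇ(z) = (L_c K₀)(−z) and the sum over i ≠ j runs over all ordered pairs. -/
open MeasureTheory Finset

/-- Reversed kernel `Ǩ(z) = K(−z)`. -/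
def rev (K : ℝ × ℝ → ℝ) : ℝ × ℝ → ℝ := fun z => K (-z)

namespace Stmt9Aux

/-- The continuous linear map `ℝ² → ℝ`, `v ↦ a v₁ + b v₂`. -/
noncomputable def D2 (a b : ℝ) : ℝ × ℝ →L[ℝ] ℝ :=
  a • ContinuousLinearMap.fst ℝ ℝ ℝ + b • ContinuousLinearMap.snd ℝ ℝ ℝ

@[simp] lemma D2_apply (a b : ℝ) (v : ℝ × ℝ) : D2 a b v = a * v.1 + b * v.2 := by
  simp [D2, smul_eq_mul]

lemma D2_ext {a b a' b' : ℝ} (h1 : a = a') (h2 : b = b') : D2 a b = D2 a' b' := by rw [h1, h2]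

lemma norm_D2_le (a b : ℝ) : ‖D2 a b‖ ≤ |a| + |b| := by
  refine ContinuousLinearMap.opNorm_le_bound _ (by positivity) fun v => ?_
  rw [D2_apply]
  calc ‖a * v.1 + b * v.2‖ ≤ ‖a * v.1‖ + ‖b * v.2‖ := norm_add_le _ _
    _ = |a| * ‖v.1‖ + |b| * ‖v.2‖ := by simp [abs_mul, Real.norm_eq_abs]
    _ ≤ |a| * ‖v‖ + |b| * ‖v‖ := by
        gcongr
        · exact norm_fst_le v
        · exact norm_snd_le v
    _ = (|a| + |b|) * ‖v‖ := by ring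

lemma D2_add (a b a' b' : ℝ) : D2 a b + D2 a' b' = D2 (a + a') (b + b') := by
  ext v <;> simp [D2_apply] <;> ring

lemma D2_smul (r a b : ℝ) : r • D2 a b = D2 (r * a) (r * b) := by
  ext v <;> simp [D2_apply] <;> ring

lemma D2_sum {ι : Type*} (s : Finset ι) (f g : ι → ℝ) :
    ∑ i ∈ s, D2 (f i) (g i) = D2 (∑ i ∈ s, f i) (∑ i ∈ s, g i) := by
  classical
  induction s using Finset.induction with
  | empty => ext v <;> simp [D2_apply]
  | insert _ _ hx ih => simp [Finset.sum_insert hx, ih, D2_add]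

lemma D2_comp_neg (a b : ℝ) :
    (D2 a b).comp (-(ContinuousLinearMap.id ℝ (ℝ × ℝ))) = D2 (-a) (-b) := by
  ext v <;> simp [D2_apply]

/-- sanity: extract partials from a `HasFDerivAt` with derivative in `D2` normal form -/
lemma pt_eq_of_hasFDerivAt {g : ℝ × ℝ → ℝ} {a b : ℝ} {y : ℝ × ℝ}
    (h : HasFDerivAt g (D2 a b) y) : pt g y = a := by
  rw [pt, h.fderiv]; simp

lemma px_eq_of_hasFDerivAt {g : ℝ × ℝ → ℝ} {a b : ℝ} {y : ℝ × ℝ}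
    (h : HasFDerivAt g (D2 a b) y) : px g y = b := by
  rw [px, h.fderiv]; simp

end Stmt9Aux

namespace Stmt9Aux

variable {Q f : ℝ × ℝ → ℝ}

/-- The integrand of `conv` is integrable. -/
lemma integrable_conv_integrand (hQc : Continuous Q) (hQs : HasCompactSupport Q)
    (hf : Continuous f) (y : ℝ × ℝ) :
    Integrable (fun z => Q (y - z) * f z) := by
  have hsupp : HasCompactSupport (fun z => Q (y - z)) := by
    have : (fun z : ℝ × ℝ => Q (y - z)) = Q ∘ (Homeomorph.subLeft y) := rfl
    rw [this]
    exact hQs.comp_homeomorph _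
  exact ((hQc.comp (continuous_const.sub continuous_id)).mul hf).integrable_of_hasCompactSupport
    (hsupp.mul_right)

lemma conv_eq_convolution (Q f : ℝ × ℝ → ℝ) :
    conv Q f = convolution f Q (ContinuousLinearMap.mul ℝ ℝ) volume := by
  funext y
  rw [conv, MeasureTheory.convolution]
  simp only [ContinuousLinearMap.mul_apply']
  exact integral_congr_ae (Filter.Eventually.of_forall fun z => mul_comm _ _)

lemma cont_pt (hQ : ContDiff ℝ 1 Q) : Continuous (pt Q) := by
  show Continuous fun u => fderiv ℝ Q u (1, 0)
  exact (hQ.continuous_fderiv one_ne_zero).clm_apply continuous_const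

lemma cont_px (hQ : ContDiff ℝ 1 Q) : Continuous (px Q) := by
  show Continuous fun u => fderiv ℝ Q u (0, 1)
  exact (hQ.continuous_fderiv one_ne_zero).clm_apply continuous_const

/-- kernel regularity: `pt` of a kernel. -/
lemma contDiff_pt {m : ℕ} (hQ : ContDiff ℝ (m+1) Q) : ContDiff ℝ m (pt Q) := by
  show ContDiff ℝ m fun u => fderiv ℝ Q u (1, 0)
  exact (hQ.fderiv_right (m := m) (by norm_cast)).clm_apply contDiff_const

lemma contDiff_px {m : ℕ} (hQ : ContDiff ℝ (m+1) Q) : ContDiff ℝ m (px Q) := by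
  show ContDiff ℝ m fun u => fderiv ℝ Q u (0, 1)
  exact (hQ.fderiv_right (m := m) (by norm_cast)).clm_apply contDiff_const

lemma hcs_pt (hQ : ContDiff ℝ 1 Q) (hQs : HasCompactSupport Q) : HasCompactSupport (pt Q) := by
  have h1 : HasCompactSupport (fderiv ℝ Q) := hQs.fderiv ℝ
  have : (pt Q) = (fun L : ℝ × ℝ →L[ℝ] ℝ => L (1, 0)) ∘ (fderiv ℝ Q) := rfl
  rw [this]
  exact h1.comp_left (by simp)

lemma hcs_px (hQ : ContDiff ℝ 1 Q) (hQs : HasCompactSupport Q) : HasCompactSupport (px Q) := by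
  have h1 : HasCompactSupport (fderiv ℝ Q) := hQs.fderiv ℝ
  have : (px Q) = (fun L : ℝ × ℝ →L[ℝ] ℝ => L (0, 1)) ∘ (fderiv ℝ Q) := rfl
  rw [this]
  exact h1.comp_left (by simp)

lemma contDiff_rev {m : ℕ} (hQ : ContDiff ℝ m Q) : ContDiff ℝ m (rev Q) :=
  hQ.comp contDiff_neg

lemma hcs_rev (hQs : HasCompactSupport Q) : HasCompactSupport (rev Q) := by
  have : rev Q = Q ∘ (Homeomorph.neg (ℝ × ℝ)) := rfl
  rw [this]; exact hQs.comp_homeomorph _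

/-- the key derivative computation for convolutions -/
lemma hasFDerivAt_conv (hQ : ContDiff ℝ 1 Q) (hQs : HasCompactSupport Q)
    (hf : Continuous f) (y : ℝ × ℝ) :
    HasFDerivAt (conv Q f) (D2 (conv (pt Q) f y) (conv (px Q) f y)) y := by
  have hloc : LocallyIntegrable f volume := hf.locallyIntegrable
  have h := hQs.hasFDerivAt_convolution_right (ContinuousLinearMap.mul ℝ ℝ) hloc hQ y
  rw [conv_eq_convolution]
  refine h.congr_fderiv (Eq.symm ?_)
  have hfd : HasCompactSupport (fderiv ℝ Q) := hQs.fderiv ℝ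
  have hfdc : Continuous (fderiv ℝ Q) := hQ.continuous_fderiv one_ne_zero
  refine ContinuousLinearMap.ext fun v => ?_
  rw [convolution_precompR_apply (ContinuousLinearMap.mul ℝ ℝ) hloc hfd hfdc y v]
  have hdecomp : ∀ u : ℝ × ℝ, fderiv ℝ Q u v = v.1 * pt Q u + v.2 * px Q u := by
    intro u
    have hv : v = v.1 • ((1:ℝ), (0:ℝ)) + v.2 • ((0:ℝ), (1:ℝ)) := by
      simp [Prod.ext_iff]
    rw [pt, px]
    conv_lhs => rw [hv]
    simp only [map_add, ContinuousLinearMap.map_smul, smul_eq_mul]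
  have hint1 : Integrable (fun z => pt Q (y - z) * f z) :=
    integrable_conv_integrand (cont_pt hQ) (hcs_pt hQ hQs) hf y
  have hint2 : Integrable (fun z => px Q (y - z) * f z) :=
    integrable_conv_integrand (cont_px hQ) (hcs_px hQ hQs) hf y
  rw [convolution_def]
  simp only [ContinuousLinearMap.mul_apply']
  have e1 : (fun z => f z * (fderiv ℝ Q (y - z)) v)
      = fun z => v.1 * (pt Q (y - z) * f z) + v.2 * (px Q (y - z) * f z) := by
    funext z; rw [hdecomp]; ring
  rw [e1, integral_add (hint1.const_mul _) (hint2.const_mul _),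
    integral_const_mul, integral_const_mul]
  rw [D2_apply, conv, conv]
  ring

/-- uniform bound for convolutions against a bounded field -/
lemma abs_conv_le {M : ℝ} (hQc : Continuous Q) (hQs : HasCompactSupport Q)
    (hf : Continuous f) (hfb : ∀ z, |f z| ≤ M) (y : ℝ × ℝ) :
    |conv Q f y| ≤ M * ∫ z, |Q z| := by
  have hQyint : Integrable (fun z : ℝ × ℝ => Q (y - z)) := by
    have h := integrable_conv_integrand hQc hQs continuous_const (f := fun _ => (1:ℝ)) y
    simpa using h
  have hint : Integrable (fun z => Q (y - z) * f z) :=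
    integrable_conv_integrand hQc hQs hf y
  have h1 : |conv Q f y| ≤ ∫ z, |Q (y - z) * f z| := by
    rw [conv]
    exact norm_integral_le_integral_norm (μ := volume) (fun z : ℝ × ℝ => Q (y - z) * f z)
  refine h1.trans ?_
  have h2 : ∫ z, |Q (y - z) * f z| ≤ ∫ z, |Q (y - z)| * M := by
    refine integral_mono hint.abs (hQyint.abs.mul_const M) fun z => ?_
    rw [abs_mul]
    have h0 : (0:ℝ) ≤ |Q (y - z)| := abs_nonneg _
    exact mul_le_mul_of_nonneg_left (hfb z) h0
  refine h2.trans ?_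
  rw [integral_mul_const]
  rw [show (∫ z, |Q (y - z)|) = ∫ z, |Q z| from integral_sub_left_eq_self (fun z => |Q z|) volume y]
  ring_nf
  exact le_refl _

end Stmt9Aux

namespace Stmt9Aux

variable {Ω : Type*} [MeasurableSpace Ω] {P : Measure Ω} [IsProbabilityMeasure P]

/-- Differentiation under the expectation, with derivatives in `D2` normal form. -/
lemma hasFDerivAt_int (φ U V : Ω → ℝ × ℝ → ℝ) (C : ℝ)
    (hφm : ∀ h, AEStronglyMeasurable (fun ω => φ ω h) P)
    (hUm : ∀ h, AEStronglyMeasurable (fun ω => U ω h) P)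
    (hVm : ∀ h, AEStronglyMeasurable (fun ω => V ω h) P)
    (hφb : ∀ ω h, |φ ω h| ≤ C)
    (hUb : ∀ ω h, |U ω h| ≤ C) (hVb : ∀ ω h, |V ω h| ≤ C)
    (hd : ∀ ω h, HasFDerivAt (φ ω) (D2 (U ω h) (V ω h)) h) (h₀ : ℝ × ℝ) :
    HasFDerivAt (fun h => ∫ ω, φ ω h ∂P)
      (D2 (∫ ω, U ω h₀ ∂P) (∫ ω, V ω h₀ ∂P)) h₀ := by
  have key := hasFDerivAt_integral_of_dominated_of_fderiv_le
    (F := fun h ω => φ ω h) (F' := fun h ω => D2 (U ω h) (V ω h))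
    (μ := P) (x₀ := h₀) (bound := fun _ => C + C) (s := Set.univ) Filter.univ_mem
    (Filter.Eventually.of_forall fun h => hφm h)
    ((integrable_const C).mono' (hφm h₀)
      (Filter.Eventually.of_forall fun ω => by simpa [Real.norm_eq_abs] using hφb ω h₀))
    (((hUm h₀).smul_const _).add ((hVm h₀).smul_const _))
    (Filter.Eventually.of_forall fun ω h _ =>
      (norm_D2_le _ _).trans (add_le_add ((abs_abs (U ω h)).symm ▸ (hUb ω h))
        ((abs_abs (V ω h)).symm ▸ (hVb ω h))))
    (integrable_const _)
    (Filter.Eventually.of_forall fun ω h _ => hd ω h)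
  have heq : (∫ ω, D2 (U ω h₀) (V ω h₀) ∂P) = D2 (∫ ω, U ω h₀ ∂P) (∫ ω, V ω h₀ ∂P) := by
    have hUi : Integrable (fun ω => U ω h₀) P :=
      (integrable_const C).mono' (hUm h₀)
        (Filter.Eventually.of_forall fun ω => by simpa [Real.norm_eq_abs] using hUb ω h₀)
    have hVi : Integrable (fun ω => V ω h₀) P :=
      (integrable_const C).mono' (hVm h₀)
        (Filter.Eventually.of_forall fun ω => by simpa [Real.norm_eq_abs] using hVb ω h₀)
    calc ∫ ω, D2 (U ω h₀) (V ω h₀) ∂P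
        = ∫ ω, ((U ω h₀) • ContinuousLinearMap.fst ℝ ℝ ℝ
            + (V ω h₀) • ContinuousLinearMap.snd ℝ ℝ ℝ) ∂P := by rfl
      _ = (∫ ω, U ω h₀ ∂P) • ContinuousLinearMap.fst ℝ ℝ ℝ
            + (∫ ω, V ω h₀ ∂P) • ContinuousLinearMap.snd ℝ ℝ ℝ := by
          rw [integral_add (hUi.smul_const _) (hVi.smul_const _),
            integral_smul_const, integral_smul_const]
      _ = _ := rfl
  rw [← heq]
  exact key

end Stmt9Aux

namespace Stmt9Aux

variable {Ω : Type*} [MeasurableSpace Ω] {P : Measure Ω} [IsProbabilityMeasure P]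
variable {ξ : Ω → ℝ × ℝ → ℝ}

lemma meas_conv (hmeas : Measurable (Function.uncurry ξ)) {Q : ℝ × ℝ → ℝ}
    (hQc : Continuous Q) (y : ℝ × ℝ) :
    Measurable fun ω => conv Q (ξ ω) y := by
  have h1 : StronglyMeasurable fun p : Ω × (ℝ × ℝ) => Q (y - p.2) * ξ p.1 p.2 :=
    ((hQc.measurable.comp (measurable_const.sub measurable_snd)).mul hmeas).stronglyMeasurable
  exact h1.integral_prod_right'.measurable

lemma nonempty_omega (P : Measure Ω) [IsProbabilityMeasure P] : Nonempty Ω := by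
  by_contra hc
  rw [not_nonempty_iff] at hc
  have h1 := measure_univ (μ := P)
  rw [P.eq_zero_of_isEmpty] at h1
  simp at h1

/-- Fubini for products of convolution-type integrals against the random field. -/
lemma star (hmeas : Measurable (Function.uncurry ξ)) (hcont : ∀ ω, Continuous (ξ ω))
    {M : ℝ} (hbd : ∀ ω z, |ξ ω z| ≤ M) (m : ℕ) (q : Fin m → ℝ × ℝ → ℝ)
    (hqc : ∀ i, Continuous (q i)) (hqs : ∀ i, HasCompactSupport (q i)) (h : ℝ × ℝ) :
    ∫ ω, ∏ i, (∫ z, q i z * ξ ω (z + h)) ∂P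
      = ∫ z : Fin m → ℝ × ℝ, (∏ i, q i (z i)) * (∫ ω, ∏ i, ξ ω (z i + h) ∂P) := by
  have hM0 : 0 ≤ M :=
    le_trans (abs_nonneg _) (hbd (nonempty_omega P).some 0)
  set F : Ω → (Fin m → ℝ × ℝ) → ℝ :=
    fun ω z => ∏ i, (q i (z i) * ξ ω (z i + h)) with hF
  have hFmeas : Measurable (Function.uncurry F) := by
    refine Finset.measurable_prod _ fun i _ => Measurable.mul ?_ ?_
    · exact (hqc i).measurable.comp ((measurable_pi_apply i).comp measurable_snd)
    · exact hmeas.comp (measurable_fst.prodMk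
        (Measurable.add_const (f := fun a : Ω × (Fin m → ℝ × ℝ) => a.2 i) ((measurable_pi_apply i).comp measurable_snd) h))
  -- integrability of each z-slice
  have hslice : ∀ ω, Integrable (F ω) := by
    intro ω
    refine Integrable.fintype_prod (f := fun i z => q i z * ξ ω (z + h)) fun i => ?_
    refine (((hqc i).mul ((hcont ω).comp (continuous_id.add continuous_const)))
      ).integrable_of_hasCompactSupport ((hqs i).mul_right)
  -- bound function
  set gbd : (Fin m → ℝ × ℝ) → ℝ := fun z => ∏ i, (|q i (z i)| * M) with hgbd
  have habs : ∀ i, HasCompactSupport fun z : ℝ × ℝ => |q i z| :=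
    fun i => (hqs i).comp_left (g := fun x : ℝ => |x|) abs_zero
  have hgint : Integrable gbd := by
    refine Integrable.fintype_prod (f := fun i z => |q i z| * M) fun i => ?_
    exact (((hqc i).abs).integrable_of_hasCompactSupport (habs i)).mul_const M
  have hFb : ∀ ω z, ‖F ω z‖ ≤ gbd z := by
    intro ω z
    rw [Real.norm_eq_abs, hF, Finset.abs_prod]
    refine Finset.prod_le_prod (fun i _ => abs_nonneg _) fun i _ => ?_
    rw [abs_mul]
    exact mul_le_mul_of_nonneg_left (hbd ω _) (abs_nonneg _)
  -- integrability on the product space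
  have hFint : Integrable (Function.uncurry F) (P.prod volume) := by
    rw [integrable_prod_iff hFmeas.aestronglyMeasurable]
    constructor
    · exact Filter.Eventually.of_forall fun ω => hslice ω
    · refine (integrable_const (∫ z, gbd z)).mono'
        ((hFmeas.norm.stronglyMeasurable.integral_prod_right').aestronglyMeasurable)
        (Filter.Eventually.of_forall fun ω => ?_)
      rw [Real.norm_eq_abs, abs_of_nonneg (integral_nonneg fun z => norm_nonneg _)]
      exact integral_mono (hslice ω).norm hgint fun z => hFb ω z
  calc ∫ ω, ∏ i, (∫ z, q i z * ξ ω (z + h)) ∂P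
      = ∫ ω, (∫ z : Fin m → ℝ × ℝ, F ω z) ∂P := by
        refine integral_congr_ae (Filter.Eventually.of_forall fun ω => ?_)
        exact (integral_fintype_prod_eq_prod (ι := Fin m)
          (f := fun i z => q i z * ξ ω (z + h))).symm
    _ = ∫ z : Fin m → ℝ × ℝ, (∫ ω, F ω z ∂P) := integral_integral_swap hFint
    _ = ∫ z : Fin m → ℝ × ℝ, (∏ i, q i (z i)) * (∫ ω, ∏ i, ξ ω (z i + h) ∂P) := by
        refine integral_congr_ae (Filter.Eventually.of_forall fun z => ?_)
        rw [hF]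
        simp only [Finset.prod_mul_distrib]
        rw [integral_const_mul]

end Stmt9Aux

namespace Stmt9Aux

variable {Q f : ℝ × ℝ → ℝ}

lemma contDiff_one_pt (hQ : ContDiff ℝ 2 Q) : ContDiff ℝ 1 (pt Q) :=
  contDiff_pt (m := 1) (by exact_mod_cast hQ)

lemma contDiff_one_px (hQ : ContDiff ℝ 2 Q) : ContDiff ℝ 1 (px Q) :=
  contDiff_px (m := 1) (by exact_mod_cast hQ)

lemma D2_neg (a b : ℝ) : -(D2 a b) = D2 (-a) (-b) := by
  refine ContinuousLinearMap.ext fun v => ?_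
  simp [D2_apply]; ring

/-- D2-normal-form combinators -/
lemma hasFDerivAt_const_mul_D2 {g : ℝ × ℝ → ℝ} {u v : ℝ} {x : ℝ × ℝ} (a : ℝ)
    (hg : HasFDerivAt g (D2 u v) x) :
    HasFDerivAt (fun y => a * g y) (D2 (a * u) (a * v)) x := by
  have h := hg.const_mul a
  rwa [D2_smul] at h

lemma hasFDerivAt_mul_const_D2 {g : ℝ × ℝ → ℝ} {u v : ℝ} {x : ℝ × ℝ} (a : ℝ)
    (hg : HasFDerivAt g (D2 u v) x) :
    HasFDerivAt (fun y => g y * a) (D2 (a * u) (a * v)) x := by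
  have h := hg.mul_const a
  rwa [D2_smul] at h

lemma hasFDerivAt_mul_D2 {g₁ g₂ : ℝ × ℝ → ℝ} {u₁ v₁ u₂ v₂ : ℝ} {x : ℝ × ℝ}
    (h₁ : HasFDerivAt g₁ (D2 u₁ v₁) x) (h₂ : HasFDerivAt g₂ (D2 u₂ v₂) x) :
    HasFDerivAt (fun y => g₁ y * g₂ y) (D2 (g₁ x * u₂ + g₂ x * u₁) (g₁ x * v₂ + g₂ x * v₁)) x := by
  have h := h₁.mul h₂
  rwa [D2_smul, D2_smul, D2_add] at h

lemma hasFDerivAt_sum_D2 {ι : Type*} (s : Finset ι) {g : ι → ℝ × ℝ → ℝ} {u v : ι → ℝ}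
    {x : ℝ × ℝ} (hg : ∀ i ∈ s, HasFDerivAt (g i) (D2 (u i) (v i)) x) :
    HasFDerivAt (fun y => ∑ i ∈ s, g i y) (D2 (∑ i ∈ s, u i) (∑ i ∈ s, v i)) x := by
  have h := HasFDerivAt.fun_sum hg
  rwa [D2_sum] at h

lemma hasFDerivAt_prod_D2 {ι : Type*} [DecidableEq ι] (s : Finset ι) {g : ι → ℝ × ℝ → ℝ}
    {u v : ι → ℝ} {x : ℝ × ℝ} (hg : ∀ i ∈ s, HasFDerivAt (g i) (D2 (u i) (v i)) x) :
    HasFDerivAt (fun y => ∏ i ∈ s, g i y)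
      (D2 (∑ i ∈ s, (∏ j ∈ s.erase i, g j x) * u i)
          (∑ i ∈ s, (∏ j ∈ s.erase i, g j x) * v i)) x := by
  have h := HasFDerivAt.finset_prod hg
  have e : (∑ i ∈ s, (∏ j ∈ s.erase i, g j x) • D2 (u i) (v i))
      = D2 (∑ i ∈ s, (∏ j ∈ s.erase i, g j x) * u i)
           (∑ i ∈ s, (∏ j ∈ s.erase i, g j x) * v i) := by
    rw [← D2_sum]
    exact Finset.sum_congr rfl fun i _ => D2_smul _ _ _
  rwa [e] at h

/-- translated convolutions -/
lemma hasFDerivAt_conv_shift (hQ : ContDiff ℝ 1 Q) (hQs : HasCompactSupport Q)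
    (hf : Continuous f) (w h : ℝ × ℝ) :
    HasFDerivAt (fun h => conv Q f (w + h))
      (D2 (conv (pt Q) f (w + h)) (conv (px Q) f (w + h))) h := by
  have h1 := hasFDerivAt_conv hQ hQs hf (w + h)
  have h2 : HasFDerivAt (fun h : ℝ × ℝ => w + h) (ContinuousLinearMap.id ℝ (ℝ × ℝ)) h := by
    simpa using (hasFDerivAt_id h).const_add w
  simpa [Function.comp_def] using h1.comp h h2

lemma hasFDerivAt_conv_negshift (hQ : ContDiff ℝ 1 Q) (hQs : HasCompactSupport Q)
    (hf : Continuous f) (w h : ℝ × ℝ) :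
    HasFDerivAt (fun h => conv Q f (w - h))
      (D2 (-(conv (pt Q) f (w - h))) (-(conv (px Q) f (w - h)))) h := by
  have h1 := hasFDerivAt_conv hQ hQs hf (w - h)
  have h2 : HasFDerivAt (fun h : ℝ × ℝ => w - h) (-(ContinuousLinearMap.id ℝ (ℝ × ℝ))) h := by
    simpa using (hasFDerivAt_id h).const_sub w
  have h3 := h1.comp h h2
  rwa [D2_comp_neg] at h3

/-- convolution against `Lop c Q` splits -/
lemma conv_Lop (c : ℝ) (hQ : ContDiff ℝ 2 Q) (hQs : HasCompactSupport Q)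
    (hf : Continuous f) (y : ℝ × ℝ) :
    conv (Lop c Q) f y = conv (pt Q) f y - c * conv (px (px Q)) f y := by
  have hQ1 : ContDiff ℝ 1 Q := hQ.of_le one_le_two
  have h1 : Integrable (fun z => pt Q (y - z) * f z) :=
    integrable_conv_integrand (cont_pt hQ1) (hcs_pt hQ1 hQs) hf y
  have hpx1 : ContDiff ℝ 1 (px Q) := contDiff_one_px hQ
  have hpxs : HasCompactSupport (px Q) := hcs_px hQ1 hQs
  have h2 : Integrable (fun z => px (px Q) (y - z) * f z) :=
    integrable_conv_integrand (cont_px hpx1) (hcs_px hpx1 hpxs) hf y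
  rw [conv, conv, conv]
  have e : (fun z => Lop c Q (y - z) * f z)
      = fun z => pt Q (y - z) * f z - c * (px (px Q) (y - z) * f z) := by
    funext z; rw [Lop]; ring
  rw [e, integral_sub h1 (h2.const_mul c), integral_const_mul]

/-- derivative structure of the reversed kernel -/
lemma pt_rev (hQ : ContDiff ℝ 1 Q) (u : ℝ × ℝ) : pt (rev Q) u = -(pt Q (-u)) := by
  have h1 : HasFDerivAt Q (fderiv ℝ Q (-u)) (-u) :=
    ((hQ.differentiable one_ne_zero) (-u)).hasFDerivAt
  have h2 : HasFDerivAt (fun z : ℝ × ℝ => -z) (-(ContinuousLinearMap.id ℝ (ℝ × ℝ))) u :=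
    (hasFDerivAt_id u).neg
  have h3 : HasFDerivAt (rev Q)
      ((fderiv ℝ Q (-u)).comp (-(ContinuousLinearMap.id ℝ (ℝ × ℝ)))) u := h1.comp u h2
  rw [pt, pt, h3.fderiv]
  simp

lemma px_rev (hQ : ContDiff ℝ 1 Q) (u : ℝ × ℝ) : px (rev Q) u = -(px Q (-u)) := by
  have h1 : HasFDerivAt Q (fderiv ℝ Q (-u)) (-u) :=
    ((hQ.differentiable one_ne_zero) (-u)).hasFDerivAt
  have h2 : HasFDerivAt (fun z : ℝ × ℝ => -z) (-(ContinuousLinearMap.id ℝ (ℝ × ℝ))) u :=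
    (hasFDerivAt_id u).neg
  have h3 : HasFDerivAt (rev Q)
      ((fderiv ℝ Q (-u)).comp (-(ContinuousLinearMap.id ℝ (ℝ × ℝ)))) u := h1.comp u h2
  rw [px, px, h3.fderiv]
  simp

lemma pxpx_rev (hQ : ContDiff ℝ 2 Q) (u : ℝ × ℝ) :
    px (px (rev Q)) u = px (px Q) (-u) := by
  have hpx1 : ContDiff ℝ 1 (px Q) := contDiff_one_px hQ
  have hfe : px (rev Q) = fun v => -(px Q (-v)) :=
    funext fun v => px_rev (hQ.of_le one_le_two) v
  have h1 : HasFDerivAt (px Q) (fderiv ℝ (px Q) (-u)) (-u) :=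
    ((hpx1.differentiable one_ne_zero) (-u)).hasFDerivAt
  have h2 : HasFDerivAt (fun z : ℝ × ℝ => -z) (-(ContinuousLinearMap.id ℝ (ℝ × ℝ))) u :=
    (hasFDerivAt_id u).neg
  have h3 : HasFDerivAt (fun v => -(px Q (-v)))
      (-((fderiv ℝ (px Q) (-u)).comp (-(ContinuousLinearMap.id ℝ (ℝ × ℝ))))) u :=
    (h1.comp u h2).neg
  rw [px, hfe, h3.fderiv, px]
  simp

/-- convolution against the reversed `Lop` kernel -/
lemma conv_revLop (c : ℝ) (hQ : ContDiff ℝ 2 Q) (hQs : HasCompactSupport Q)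
    (hf : Continuous f) (y : ℝ × ℝ) :
    conv (rev (Lop c Q)) f y
      = -conv (pt (rev Q)) f y - c * conv (px (px (rev Q))) f y := by
  have hrQ : ContDiff ℝ 2 (rev Q) := contDiff_rev hQ
  have hrQ1 : ContDiff ℝ 1 (rev Q) := hrQ.of_le one_le_two
  have hrQs : HasCompactSupport (rev Q) := hcs_rev hQs
  have h1 : Integrable (fun z => pt (rev Q) (y - z) * f z) :=
    integrable_conv_integrand (cont_pt hrQ1) (hcs_pt hrQ1 hrQs) hf y
  have hpx1 : ContDiff ℝ 1 (px (rev Q)) := contDiff_one_px hrQ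
  have hpxs : HasCompactSupport (px (rev Q)) := hcs_px hrQ1 hrQs
  have h2 : Integrable (fun z => px (px (rev Q)) (y - z) * f z) :=
    integrable_conv_integrand (cont_px hpx1) (hcs_px hpx1 hpxs) hf y
  rw [conv, conv, conv]
  have e : (fun z => rev (Lop c Q) (y - z) * f z)
      = fun z => (-1 : ℝ) * (pt (rev Q) (y - z) * f z) - c * (px (px (rev Q)) (y - z) * f z) := by
    funext z
    have e1 : rev (Lop c Q) (y - z) = pt Q (-(y - z)) - c * px (px Q) (-(y - z)) := by
      rw [rev, Lop]
    rw [e1, pt_rev (hQ.of_le one_le_two) (y - z), pxpx_rev hQ (y - z)]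
    ring
  rw [e, integral_sub (h1.const_mul (-1)) (h2.const_mul c), integral_const_mul,
    integral_const_mul]
  ring

end Stmt9Aux

namespace Stmt9Aux

variable {f : ℝ × ℝ → ℝ}

/-- first-order derivative of the A-side integrand (in the shift variable) -/
lemma Aside1 {n : ℕ} (K : Fin n → ℝ × ℝ → ℝ) (hK1 : ∀ i, ContDiff ℝ 1 (K i))
    (hKs : ∀ i, HasCompactSupport (K i)) (hf : Continuous f) (a0 : ℝ) (w h : ℝ × ℝ) :
    HasFDerivAt (fun h => a0 * ∏ k, conv (K k) f (w + h))
      (D2 (a0 * ∑ i, (∏ j ∈ univ.erase i, conv (K j) f (w + h)) * conv (pt (K i)) f (w + h))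
          (a0 * ∑ i, (∏ j ∈ univ.erase i, conv (K j) f (w + h)) * conv (px (K i)) f (w + h)))
      h := by
  classical
  exact hasFDerivAt_const_mul_D2 a0 (hasFDerivAt_prod_D2 univ
    (fun k _ => hasFDerivAt_conv_shift (hK1 k) (hKs k) hf w h))

/-- second-order (space) derivative of the A-side integrand -/
lemma Aside2 {n : ℕ} (K : Fin n → ℝ × ℝ → ℝ) (hK2 : ∀ i, ContDiff ℝ 2 (K i))
    (hKs : ∀ i, HasCompactSupport (K i)) (hf : Continuous f) (a0 : ℝ) (w h : ℝ × ℝ) :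
    HasFDerivAt
      (fun h => a0 * ∑ i, (∏ j ∈ univ.erase i, conv (K j) f (w + h)) * conv (px (K i)) f (w + h))
      (D2 (a0 * ∑ i, ((∏ j ∈ univ.erase i, conv (K j) f (w + h))
              * conv (pt (px (K i))) f (w + h)
            + conv (px (K i)) f (w + h)
              * ∑ j ∈ univ.erase i, (∏ k ∈ (univ.erase i).erase j, conv (K k) f (w + h))
                  * conv (pt (K j)) f (w + h)))
          (a0 * ∑ i, ((∏ j ∈ univ.erase i, conv (K j) f (w + h))
              * conv (px (px (K i))) f (w + h)
            + conv (px (K i)) f (w + h)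
              * ∑ j ∈ univ.erase i, (∏ k ∈ (univ.erase i).erase j, conv (K k) f (w + h))
                  * conv (px (K j)) f (w + h)))) h := by
  classical
  refine hasFDerivAt_const_mul_D2 a0 (hasFDerivAt_sum_D2 univ fun i _ => ?_)
  have hK1 : ∀ i, ContDiff ℝ 1 (K i) := fun i => (hK2 i).of_le one_le_two
  exact hasFDerivAt_mul_D2
    (hasFDerivAt_prod_D2 (univ.erase i)
      (fun k _ => hasFDerivAt_conv_shift (hK1 k) (hKs k) hf w h))
    (hasFDerivAt_conv_shift (contDiff_one_px (hK2 i)) (hcs_px (hK1 i) (hKs i)) hf w h)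

/-- first-order derivative of the B-side integrand -/
lemma Bside1 {Q : ℝ × ℝ → ℝ} (hQ : ContDiff ℝ 1 Q) (hQs : HasCompactSupport Q)
    (hf : Continuous f) (cP : ℝ) (w h : ℝ × ℝ) :
    HasFDerivAt (fun h => conv Q f (w - h) * cP)
      (D2 (cP * -(conv (pt Q) f (w - h))) (cP * -(conv (px Q) f (w - h)))) h :=
  hasFDerivAt_mul_const_D2 cP (hasFDerivAt_conv_negshift hQ hQs hf w h)

/-- second-order derivative of the B-side integrand -/
lemma Bside2 {Q : ℝ × ℝ → ℝ} (hQ : ContDiff ℝ 1 Q) (hQs : HasCompactSupport Q)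
    (hf : Continuous f) (cP : ℝ) (w h : ℝ × ℝ) :
    HasFDerivAt (fun h => cP * -(conv Q f (w - h)))
      (D2 (cP * conv (pt Q) f (w - h)) (cP * conv (px Q) f (w - h))) h := by
  have h1 := (hasFDerivAt_conv_negshift hQ hQs hf w h).neg
  rw [D2_neg, neg_neg, neg_neg] at h1
  exact hasFDerivAt_const_mul_D2 cP h1

end Stmt9Aux

open Stmt9Aux in
theorem stmt9 (n : ℕ) (hn : 1 ≤ n) (c : ℝ)
    {Ω : Type*} [MeasurableSpace Ω] (P : Measure Ω) [IsProbabilityMeasure P]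
    (ξ : Ω → ℝ × ℝ → ℝ) (hmeas : Measurable (Function.uncurry ξ))
    (hcont : ∀ ω, Continuous (ξ ω))
    (M : ℝ) (hbd : ∀ ω z, |ξ ω z| ≤ M)
    (hstat : ∀ (h : ℝ × ℝ) (z : Fin (n + 1) → ℝ × ℝ),
      (∫ ω, ∏ i, ξ ω (z i + h) ∂P) = ∫ ω, ∏ i, ξ ω (z i) ∂P)
    (K₀ : ℝ × ℝ → ℝ) (K : Fin n → ℝ × ℝ → ℝ)
    (hK₀ : ContDiff ℝ 2 K₀) (hK₀supp : HasCompactSupport K₀)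
    (hK : ∀ i, ContDiff ℝ 2 (K i)) (hKsupp : ∀ i, HasCompactSupport (K i)) :
    ∀ w : ℝ × ℝ,
      (∫ ω, conv (rev K₀) (ξ ω) w
          * ((∑ i, conv (Lop c (K i)) (ξ ω) w
                * ∏ k ∈ univ.erase i, conv (K k) (ξ ω) w)
            - c * ∑ i, ∑ j ∈ univ.erase i,
                conv (px (K i)) (ξ ω) w * conv (px (K j)) (ξ ω) w
                  * ∏ k ∈ (univ.erase i).erase j, conv (K k) (ξ ω) w) ∂P)
      = ∫ ω, conv (rev (Lop c K₀)) (ξ ω) w * ∏ k, conv (K k) (ξ ω) w ∂P := by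
  intro w
  classical
  have hM0 : 0 ≤ M := le_trans (abs_nonneg _) (hbd (nonempty_omega P).some 0)
  -- regularity of all kernels involved
  have hK1 : ∀ i, ContDiff ℝ 1 (K i) := fun i => (hK i).of_le one_le_two
  have hcK : ∀ i, Continuous (K i) := fun i => (hK1 i).continuous
  have hcKt : ∀ i, Continuous (pt (K i)) := fun i => cont_pt (hK1 i)
  have hsKt : ∀ i, HasCompactSupport (pt (K i)) := fun i => hcs_pt (hK1 i) (hKsupp i)
  have hdKx : ∀ i, ContDiff ℝ 1 (px (K i)) := fun i => contDiff_one_px (hK i)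
  have hcKx : ∀ i, Continuous (px (K i)) := fun i => cont_px (hK1 i)
  have hsKx : ∀ i, HasCompactSupport (px (K i)) := fun i => hcs_px (hK1 i) (hKsupp i)
  have hcKtx : ∀ i, Continuous (pt (px (K i))) := fun i => cont_pt (hdKx i)
  have hsKtx : ∀ i, HasCompactSupport (pt (px (K i))) := fun i => hcs_pt (hdKx i) (hsKx i)
  have hcKxx : ∀ i, Continuous (px (px (K i))) := fun i => cont_px (hdKx i)
  have hsKxx : ∀ i, HasCompactSupport (px (px (K i))) := fun i => hcs_px (hdKx i) (hsKx i)
  have hr2 : ContDiff ℝ 2 (rev K₀) := contDiff_rev hK₀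
  have hr1 : ContDiff ℝ 1 (rev K₀) := hr2.of_le one_le_two
  have hrs : HasCompactSupport (rev K₀) := hcs_rev hK₀supp
  have hcr : Continuous (rev K₀) := hr1.continuous
  have hcrt : Continuous (pt (rev K₀)) := cont_pt hr1
  have hsrt : HasCompactSupport (pt (rev K₀)) := hcs_pt hr1 hrs
  have hrx1 : ContDiff ℝ 1 (px (rev K₀)) := contDiff_one_px hr2
  have hcrx : Continuous (px (rev K₀)) := cont_px hr1
  have hrxs : HasCompactSupport (px (rev K₀)) := hcs_px hr1 hrs
  have hcrtx : Continuous (pt (px (rev K₀))) := cont_pt hrx1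
  have hsrtx : HasCompactSupport (pt (px (rev K₀))) := hcs_pt hrx1 hrxs
  have hcrxx : Continuous (px (px (rev K₀))) := cont_px hrx1
  have hsrxx : HasCompactSupport (px (px (rev K₀))) := hcs_px hrx1 hrxs
  -- the bound R
  have hJnn : ∀ Q : ℝ × ℝ → ℝ, 0 ≤ M * ∫ z, |Q z| :=
    fun Q => mul_nonneg hM0 (integral_nonneg fun z => abs_nonneg _)
  set S : Fin n → ℝ := fun i => M * (∫ z, |K i z|) + M * (∫ z, |pt (K i) z|)
      + M * (∫ z, |px (K i) z|) + M * (∫ z, |pt (px (K i)) z|) + M * (∫ z, |px (px (K i)) z|)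
    with hSdef
  set T : ℝ := M * (∫ z, |rev K₀ z|) + M * (∫ z, |pt (rev K₀) z|) + M * (∫ z, |px (rev K₀) z|)
      + M * (∫ z, |pt (px (rev K₀)) z|) + M * (∫ z, |px (px (rev K₀)) z|) with hTdef
  set R : ℝ := 1 + T + ∑ i, S i with hRdef
  have hSnn : ∀ i, 0 ≤ S i := fun i => by
    have h1 := hJnn (K i); have h2 := hJnn (pt (K i)); have h3 := hJnn (px (K i))
    have h4 := hJnn (pt (px (K i))); have h5 := hJnn (px (px (K i)))
    rw [hSdef]; dsimp only; linarith
  have hTnn : 0 ≤ T := by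
    have h1 := hJnn (rev K₀); have h2 := hJnn (pt (rev K₀)); have h3 := hJnn (px (rev K₀))
    have h4 := hJnn (pt (px (rev K₀))); have h5 := hJnn (px (px (rev K₀)))
    rw [hTdef]; linarith
  have hSum : (0:ℝ) ≤ ∑ i, S i := Finset.sum_nonneg fun i _ => hSnn i
  have hR1 : 1 ≤ R := by rw [hRdef]; linarith
  have hR0 : 0 ≤ R := le_trans zero_le_one hR1
  have hSle : ∀ i, S i ≤ ∑ j, S j := fun i => Finset.single_le_sum (fun j _ => hSnn j) (mem_univ i)
  -- uniform bounds on all convolutions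
  have hbOf : ∀ (Q : ℝ × ℝ → ℝ), Continuous Q → HasCompactSupport Q →
      (M * ∫ z, |Q z|) ≤ R → ∀ ω y, |conv Q (ξ ω) y| ≤ R := fun Q hc hs hle ω y =>
    (abs_conv_le hc hs (hcont ω) (hbd ω) y).trans hle
  have hbK : ∀ i ω y, |conv (K i) (ξ ω) y| ≤ R := fun i => by
    refine hbOf _ (hcK i) (hKsupp i) ?_
    have h1 := hSle i; have h2 := hJnn (pt (K i)); have h3 := hJnn (px (K i))
    have h4 := hJnn (pt (px (K i))); have h5 := hJnn (px (px (K i)))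
    rw [hRdef]; rw [hSdef] at h1; dsimp only at h1; linarith
  have hbKt : ∀ i ω y, |conv (pt (K i)) (ξ ω) y| ≤ R := fun i => by
    refine hbOf _ (hcKt i) (hsKt i) ?_
    have h1 := hSle i; have h2 := hJnn (K i); have h3 := hJnn (px (K i))
    have h4 := hJnn (pt (px (K i))); have h5 := hJnn (px (px (K i)))
    rw [hRdef]; rw [hSdef] at h1; dsimp only at h1; linarith
  have hbKx : ∀ i ω y, |conv (px (K i)) (ξ ω) y| ≤ R := fun i => by
    refine hbOf _ (hcKx i) (hsKx i) ?_
    have h1 := hSle i; have h2 := hJnn (K i); have h3 := hJnn (pt (K i))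
    have h4 := hJnn (pt (px (K i))); have h5 := hJnn (px (px (K i)))
    rw [hRdef]; rw [hSdef] at h1; dsimp only at h1; linarith
  have hbKtx : ∀ i ω y, |conv (pt (px (K i))) (ξ ω) y| ≤ R := fun i => by
    refine hbOf _ (hcKtx i) (hsKtx i) ?_
    have h1 := hSle i; have h2 := hJnn (K i); have h3 := hJnn (pt (K i))
    have h4 := hJnn (px (K i)); have h5 := hJnn (px (px (K i)))
    rw [hRdef]; rw [hSdef] at h1; dsimp only at h1; linarith
  have hbKxx : ∀ i ω y, |conv (px (px (K i))) (ξ ω) y| ≤ R := fun i => by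
    refine hbOf _ (hcKxx i) (hsKxx i) ?_
    have h1 := hSle i; have h2 := hJnn (K i); have h3 := hJnn (pt (K i))
    have h4 := hJnn (px (K i)); have h5 := hJnn (pt (px (K i)))
    rw [hRdef]; rw [hSdef] at h1; dsimp only at h1; linarith
  have hbr : ∀ ω y, |conv (rev K₀) (ξ ω) y| ≤ R := by
    refine hbOf _ hcr hrs ?_
    have h2 := hJnn (pt (rev K₀)); have h3 := hJnn (px (rev K₀))
    have h4 := hJnn (pt (px (rev K₀))); have h5 := hJnn (px (px (rev K₀)))
    rw [hRdef, hTdef]; linarith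
  have hbrt : ∀ ω y, |conv (pt (rev K₀)) (ξ ω) y| ≤ R := by
    refine hbOf _ hcrt hsrt ?_
    have h2 := hJnn (rev K₀); have h3 := hJnn (px (rev K₀))
    have h4 := hJnn (pt (px (rev K₀))); have h5 := hJnn (px (px (rev K₀)))
    rw [hRdef, hTdef]; linarith
  have hbrx : ∀ ω y, |conv (px (rev K₀)) (ξ ω) y| ≤ R := by
    refine hbOf _ hcrx hrxs ?_
    have h2 := hJnn (rev K₀); have h3 := hJnn (pt (rev K₀))
    have h4 := hJnn (pt (px (rev K₀))); have h5 := hJnn (px (px (rev K₀)))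
    rw [hRdef, hTdef]; linarith
  have hbrtx : ∀ ω y, |conv (pt (px (rev K₀))) (ξ ω) y| ≤ R := by
    refine hbOf _ hcrtx hsrtx ?_
    have h2 := hJnn (rev K₀); have h3 := hJnn (pt (rev K₀))
    have h4 := hJnn (px (rev K₀)); have h5 := hJnn (px (px (rev K₀)))
    rw [hRdef, hTdef]; linarith
  have hbrxx : ∀ ω y, |conv (px (px (rev K₀))) (ξ ω) y| ≤ R := by
    refine hbOf _ hcrxx hsrxx ?_
    have h2 := hJnn (rev K₀); have h3 := hJnn (pt (rev K₀))
    have h4 := hJnn (px (rev K₀)); have h5 := hJnn (pt (px (rev K₀)))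
    rw [hRdef, hTdef]; linarith
  -- bounds on products and sums
  have hprodR : ∀ ω (y : ℝ × ℝ) (s : Finset (Fin n)), |∏ k ∈ s, conv (K k) (ξ ω) y| ≤ R ^ n := by
    intro ω y s
    calc |∏ k ∈ s, conv (K k) (ξ ω) y| = ∏ k ∈ s, |conv (K k) (ξ ω) y| := Finset.abs_prod _ _
      _ ≤ ∏ _k ∈ s, R := Finset.prod_le_prod (fun _ _ => abs_nonneg _) (fun k _ => hbK k ω y)
      _ = R ^ s.card := Finset.prod_const R
      _ ≤ R ^ n := pow_le_pow_right₀ hR1 (by simpa using Finset.card_le_univ s)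
  have habs_sum : ∀ (s : Finset (Fin n)) (t : Fin n → ℝ) (b : ℝ), (∀ i, |t i| ≤ b) →
      |∑ i ∈ s, t i| ≤ (n : ℝ) * b := by
    intro s t b ht
    calc |∑ i ∈ s, t i| ≤ ∑ i ∈ s, |t i| := Finset.abs_sum_le_sum_abs _ _
      _ ≤ ∑ i : Fin n, |t i| :=
          Finset.sum_le_sum_of_subset_of_nonneg (Finset.subset_univ s) (fun _ _ _ => abs_nonneg _)
      _ ≤ ∑ _i : Fin n, b := Finset.sum_le_sum fun i _ => ht i
      _ = (n : ℝ) * b := by rw [Finset.sum_const, Finset.card_univ, Fintype.card_fin, nsmul_eq_mul]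
  clear hRdef hSdef hTdef
  clear_value S T R
  set Cbig : ℝ := ((n : ℝ) + 1) ^ 2 * R ^ (n + 3) with hCdef
  have hRn1 : 1 ≤ R ^ n := by
    calc (1:ℝ) = 1 ^ n := (one_pow n).symm
      _ ≤ R ^ n := pow_le_pow_left₀ zero_le_one hR1 n
  have hpow3 : R ^ (n + 3) = R ^ n * R ^ 3 := pow_add R n 3
  have hN0 : (0:ℝ) ≤ (n:ℝ) := Nat.cast_nonneg n
  have h13 : R ≤ R ^ 3 := by
    calc R = R ^ 1 := (pow_one R).symm
      _ ≤ R ^ 3 := pow_le_pow_right₀ hR1 (by norm_num)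
  have h23 : R ^ 2 ≤ R ^ 3 := pow_le_pow_right₀ hR1 (by norm_num)
  have hsqexp : ((n:ℝ)+1)^2 = (n:ℝ)^2 + 2*(n:ℝ) + 1 := by ring
  have hn2 : (n:ℝ) ≤ ((n:ℝ)+1)^2 := by rw [hsqexp]; nlinarith [hN0, sq_nonneg ((n:ℝ))]
  have h1n2 : (1:ℝ) ≤ ((n:ℝ)+1)^2 := by rw [hsqexp]; nlinarith [hN0, sq_nonneg ((n:ℝ))]
  have hC1 : R * R ^ n ≤ Cbig := by
    rw [hCdef, hpow3]
    calc R * R ^ n = R ^ n * R := by ring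
      _ ≤ R ^ n * R ^ 3 := mul_le_mul_of_nonneg_left h13 (pow_nonneg hR0 n)
      _ ≤ ((n:ℝ)+1)^2 * (R ^ n * R ^ 3) := le_mul_of_one_le_left (mul_nonneg (pow_nonneg hR0 n) (pow_nonneg hR0 3)) h1n2
  have hC2 : R * ((n:ℝ) * (R ^ n * R)) ≤ Cbig := by
    rw [hCdef, hpow3]
    calc R * ((n:ℝ) * (R ^ n * R)) = (n:ℝ) * (R ^ n * R ^ 2) := by ring
      _ ≤ (n:ℝ) * (R ^ n * R ^ 3) :=
          mul_le_mul_of_nonneg_left (mul_le_mul_of_nonneg_left h23 (pow_nonneg hR0 n)) hN0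
      _ ≤ ((n:ℝ)+1)^2 * (R ^ n * R ^ 3) := mul_le_mul_of_nonneg_right hn2 (mul_nonneg (pow_nonneg hR0 n) (pow_nonneg hR0 3))
  have hC3 : R * ((n:ℝ) * (R ^ n * R + R * ((n:ℝ) * (R ^ n * R)))) ≤ Cbig := by
    rw [hCdef, hpow3]
    have e1 : R * ((n:ℝ) * (R ^ n * R + R * ((n:ℝ) * (R ^ n * R))))
        = (n:ℝ) * (R ^ n * R ^ 2) + (n:ℝ)^2 * (R ^ n * R ^ 3) := by ring
    have e2 : (n:ℝ) * (R ^ n * R ^ 2) ≤ (n:ℝ) * (R ^ n * R ^ 3) :=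
      mul_le_mul_of_nonneg_left (mul_le_mul_of_nonneg_left h23 (pow_nonneg hR0 n)) hN0
    have e3 : ((n:ℝ) + (n:ℝ)^2) * (R ^ n * R ^ 3) ≤ ((n:ℝ)+1)^2 * (R ^ n * R ^ 3) :=
      mul_le_mul_of_nonneg_right (by rw [hsqexp]; nlinarith [hN0])
        (mul_nonneg (pow_nonneg hR0 n) (pow_nonneg hR0 3))
    linarith [e1, e2, e3]
  clear hCdef
  clear_value Cbig
  -- measurability facts
  have mc : ∀ (Q : ℝ × ℝ → ℝ), Continuous Q → ∀ y, Measurable fun ω => conv Q (ξ ω) y :=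
    fun Q hQ y => meas_conv hmeas hQ y
  have mprod : ∀ y, Measurable fun ω => ∏ k, conv (K k) (ξ ω) y := fun y =>
    Finset.measurable_prod _ fun k _ => mc _ (hcK k) y
  have mφA : ∀ h : ℝ × ℝ, AEStronglyMeasurable (fun ω => conv (rev K₀) (ξ ω) w * ∏ k, conv (K k) (ξ ω) (w + h)) P := fun h =>
    ((mc _ hcr w).mul (mprod (w + h))).aestronglyMeasurable
  have mUA : ∀ h : ℝ × ℝ, AEStronglyMeasurable (fun ω => conv (rev K₀) (ξ ω) w * ∑ i, (∏ j ∈ univ.erase i, conv (K j) (ξ ω) (w + h)) * conv (pt (K i)) (ξ ω) (w + h)) P := fun h =>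
    ((mc _ hcr w).mul (Finset.measurable_sum _ fun i _ =>
      (Finset.measurable_prod _ fun j _ => mc _ (hcK j) (w + h)).mul
        (mc _ (hcKt i) (w + h)))).aestronglyMeasurable
  have mVA : ∀ h : ℝ × ℝ, AEStronglyMeasurable (fun ω => conv (rev K₀) (ξ ω) w * ∑ i, (∏ j ∈ univ.erase i, conv (K j) (ξ ω) (w + h)) * conv (px (K i)) (ξ ω) (w + h)) P := fun h =>
    ((mc _ hcr w).mul (Finset.measurable_sum _ fun i _ =>
      (Finset.measurable_prod _ fun j _ => mc _ (hcK j) (w + h)).mul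
        (mc _ (hcKx i) (w + h)))).aestronglyMeasurable
  have mUA2 : ∀ h : ℝ × ℝ, AEStronglyMeasurable (fun ω => conv (rev K₀) (ξ ω) w * ∑ i, ((∏ j ∈ univ.erase i, conv (K j) (ξ ω) (w + h)) * conv (pt (px (K i))) (ξ ω) (w + h) + conv (px (K i)) (ξ ω) (w + h) * ∑ j ∈ univ.erase i, (∏ k ∈ (univ.erase i).erase j, conv (K k) (ξ ω) (w + h)) * conv (pt (K j)) (ξ ω) (w + h))) P := fun h =>
    ((mc _ hcr w).mul (Finset.measurable_sum _ fun i _ =>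
      ((Finset.measurable_prod _ fun j _ => mc _ (hcK j) (w + h)).mul
          (mc _ (hcKtx i) (w + h))).add
        ((mc _ (hcKx i) (w + h)).mul (Finset.measurable_sum _ fun j _ =>
          (Finset.measurable_prod _ fun k _ => mc _ (hcK k) (w + h)).mul
            (mc _ (hcKt j) (w + h)))))).aestronglyMeasurable
  have mVA2 : ∀ h : ℝ × ℝ, AEStronglyMeasurable (fun ω => conv (rev K₀) (ξ ω) w * ∑ i, ((∏ j ∈ univ.erase i, conv (K j) (ξ ω) (w + h)) * conv (px (px (K i))) (ξ ω) (w + h) + conv (px (K i)) (ξ ω) (w + h) * ∑ j ∈ univ.erase i, (∏ k ∈ (univ.erase i).erase j, conv (K k) (ξ ω) (w + h)) * conv (px (K j)) (ξ ω) (w + h))) P := fun h =>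
    ((mc _ hcr w).mul (Finset.measurable_sum _ fun i _ =>
      ((Finset.measurable_prod _ fun j _ => mc _ (hcK j) (w + h)).mul
          (mc _ (hcKxx i) (w + h))).add
        ((mc _ (hcKx i) (w + h)).mul (Finset.measurable_sum _ fun j _ =>
          (Finset.measurable_prod _ fun k _ => mc _ (hcK k) (w + h)).mul
            (mc _ (hcKx j) (w + h)))))).aestronglyMeasurable
  have mφB : ∀ h : ℝ × ℝ, AEStronglyMeasurable (fun ω => conv (rev K₀) (ξ ω) (w - h) * ∏ k, conv (K k) (ξ ω) w) P := fun h =>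
    ((mc _ hcr (w - h)).mul (mprod w)).aestronglyMeasurable
  have mUB : ∀ h : ℝ × ℝ, AEStronglyMeasurable (fun ω => (∏ k, conv (K k) (ξ ω) w) * -conv (pt (rev K₀)) (ξ ω) (w - h)) P := fun h =>
    ((mprod w).mul (mc _ hcrt (w - h)).neg).aestronglyMeasurable
  have mVB : ∀ h : ℝ × ℝ, AEStronglyMeasurable (fun ω => (∏ k, conv (K k) (ξ ω) w) * -conv (px (rev K₀)) (ξ ω) (w - h)) P := fun h =>
    ((mprod w).mul (mc _ hcrx (w - h)).neg).aestronglyMeasurable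
  have mUB2 : ∀ h : ℝ × ℝ, AEStronglyMeasurable (fun ω => (∏ k, conv (K k) (ξ ω) w) * conv (pt (px (rev K₀))) (ξ ω) (w - h)) P := fun h =>
    ((mprod w).mul (mc _ hcrtx (w - h))).aestronglyMeasurable
  have mVB2 : ∀ h : ℝ × ℝ, AEStronglyMeasurable (fun ω => (∏ k, conv (K k) (ξ ω) w) * conv (px (px (rev K₀))) (ξ ω) (w - h)) P := fun h =>
    ((mprod w).mul (mc _ hcrxx (w - h))).aestronglyMeasurable
  -- bound facts
  have bφA : ∀ ω (h : ℝ × ℝ), |conv (rev K₀) (ξ ω) w * ∏ k, conv (K k) (ξ ω) (w + h)| ≤ Cbig := by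
    intro ω h
    rw [abs_mul]
    refine le_trans (mul_le_mul (hbr ω w) (hprodR ω (w + h) univ) (abs_nonneg _) hR0) hC1
  have bUAgen : ∀ (d : (ℝ × ℝ → ℝ) → ℝ × ℝ → ℝ),
      (∀ i ω y, |conv (d (K i)) (ξ ω) y| ≤ R) →
      ∀ ω (h : ℝ × ℝ), |conv (rev K₀) (ξ ω) w * ∑ i, (∏ j ∈ univ.erase i, conv (K j) (ξ ω) (w + h)) *
        conv (d (K i)) (ξ ω) (w + h)| ≤ Cbig := by
    intro d hd ω h
    rw [abs_mul]
    refine le_trans (mul_le_mul (hbr ω w) (habs_sum _ _ _ fun i => ?_) (abs_nonneg _) hR0) hC2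
    rw [abs_mul]
    exact mul_le_mul (hprodR ω (w + h) _) (hd i ω (w + h)) (abs_nonneg _) (pow_nonneg hR0 n)
  have bUA := bUAgen pt hbKt
  have bVA := bUAgen px hbKx
  have bUA2gen : ∀ (d : (ℝ × ℝ → ℝ) → ℝ × ℝ → ℝ),
      (∀ i ω y, |conv (d (px (K i))) (ξ ω) y| ≤ R) →
      (∀ i ω y, |conv (d (K i)) (ξ ω) y| ≤ R) →
      ∀ ω (h : ℝ × ℝ), |conv (rev K₀) (ξ ω) w * ∑ i, ((∏ j ∈ univ.erase i, conv (K j) (ξ ω) (w + h)) *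
        conv (d (px (K i))) (ξ ω) (w + h) + conv (px (K i)) (ξ ω) (w + h) *
        ∑ j ∈ univ.erase i, (∏ k ∈ (univ.erase i).erase j, conv (K k) (ξ ω) (w + h)) *
        conv (d (K j)) (ξ ω) (w + h))| ≤ Cbig := by
    intro d hd1 hd2 ω h
    rw [abs_mul]
    refine le_trans (mul_le_mul (hbr ω w) (habs_sum _ _ _ fun i => ?_) (abs_nonneg _) hR0) hC3
    refine le_trans (abs_add_le _ _) (add_le_add ?_ ?_)
    · rw [abs_mul]
      exact mul_le_mul (hprodR ω (w + h) _) (hd1 i ω (w + h)) (abs_nonneg _) (pow_nonneg hR0 n)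
    · rw [abs_mul]
      refine mul_le_mul (hbKx i ω (w + h)) (habs_sum _ _ _ fun j => ?_) (abs_nonneg _) hR0
      rw [abs_mul]
      exact mul_le_mul (hprodR ω (w + h) _) (hd2 j ω (w + h)) (abs_nonneg _) (pow_nonneg hR0 n)
  have bUA2 := bUA2gen pt hbKtx hbKt
  have bVA2 := bUA2gen px hbKxx hbKx
  have bφB : ∀ ω (h : ℝ × ℝ), |conv (rev K₀) (ξ ω) (w - h) * ∏ k, conv (K k) (ξ ω) w| ≤ Cbig := by
    intro ω h
    rw [abs_mul]
    exact le_trans (mul_le_mul (hbr ω (w - h)) (hprodR ω w univ) (abs_nonneg _) hR0) hC1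
  have bBgen : ∀ (g : ℝ × ℝ → ℝ), (∀ ω y, |conv g (ξ ω) y| ≤ R) → ∀ ω (h : ℝ × ℝ),
      |(∏ k, conv (K k) (ξ ω) w) * conv g (ξ ω) (w - h)| ≤ Cbig := by
    intro g hg ω h
    rw [abs_mul]
    calc |∏ k, conv (K k) (ξ ω) w| * |conv g (ξ ω) (w - h)|
        ≤ R ^ n * R := mul_le_mul (hprodR ω w univ) (hg ω (w - h)) (abs_nonneg _)
          (pow_nonneg hR0 n)
      _ = R * R ^ n := by ring
      _ ≤ Cbig := hC1
  have bUB : ∀ ω (h : ℝ × ℝ), |(∏ k, conv (K k) (ξ ω) w) * -conv (pt (rev K₀)) (ξ ω) (w - h)| ≤ Cbig := by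
    intro ω h
    have h1 := bBgen (pt (rev K₀)) hbrt ω h
    rw [abs_mul] at h1 ⊢
    rwa [abs_neg]
  have bVB : ∀ ω (h : ℝ × ℝ), |(∏ k, conv (K k) (ξ ω) w) * -conv (px (rev K₀)) (ξ ω) (w - h)| ≤ Cbig := by
    intro ω h
    have h1 := bBgen (px (rev K₀)) hbrx ω h
    rw [abs_mul] at h1 ⊢
    rwa [abs_neg]
  have bUB2 := bBgen (pt (px (rev K₀))) hbrtx
  have bVB2 := bBgen (px (px (rev K₀))) hbrxx
  -- the four differentiations under the expectation
  have hAint1 : ∀ h₀ : ℝ × ℝ, HasFDerivAt (fun h => ∫ ω, conv (rev K₀) (ξ ω) w * ∏ k, conv (K k) (ξ ω) (w + h) ∂P)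
      (D2 (∫ ω, conv (rev K₀) (ξ ω) w * ∑ i, (∏ j ∈ univ.erase i, conv (K j) (ξ ω) (w + h₀)) * conv (pt (K i)) (ξ ω) (w + h₀) ∂P) (∫ ω, conv (rev K₀) (ξ ω) w * ∑ i, (∏ j ∈ univ.erase i, conv (K j) (ξ ω) (w + h₀)) * conv (px (K i)) (ξ ω) (w + h₀) ∂P)) h₀ :=
    hasFDerivAt_int (fun ω h => conv (rev K₀) (ξ ω) w * ∏ k, conv (K k) (ξ ω) (w + h)) (fun ω h => conv (rev K₀) (ξ ω) w * ∑ i, (∏ j ∈ univ.erase i, conv (K j) (ξ ω) (w + h)) * conv (pt (K i)) (ξ ω) (w + h))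
      (fun ω h => conv (rev K₀) (ξ ω) w * ∑ i, (∏ j ∈ univ.erase i, conv (K j) (ξ ω) (w + h)) * conv (px (K i)) (ξ ω) (w + h)) Cbig mφA mUA mVA bφA bUA bVA
      (fun ω h => Aside1 K hK1 hKsupp (hcont ω) _ w h)
  have hAint2 : ∀ h₀ : ℝ × ℝ, HasFDerivAt (fun h => ∫ ω, conv (rev K₀) (ξ ω) w * ∑ i, (∏ j ∈ univ.erase i, conv (K j) (ξ ω) (w + h)) * conv (px (K i)) (ξ ω) (w + h) ∂P)
      (D2 (∫ ω, conv (rev K₀) (ξ ω) w * ∑ i, ((∏ j ∈ univ.erase i, conv (K j) (ξ ω) (w + h₀)) * conv (pt (px (K i))) (ξ ω) (w + h₀) + conv (px (K i)) (ξ ω) (w + h₀) * ∑ j ∈ univ.erase i, (∏ k ∈ (univ.erase i).erase j, conv (K k) (ξ ω) (w + h₀)) * conv (pt (K j)) (ξ ω) (w + h₀)) ∂P) (∫ ω, conv (rev K₀) (ξ ω) w * ∑ i, ((∏ j ∈ univ.erase i, conv (K j) (ξ ω) (w + h₀)) * conv (px (px (K i))) (ξ ω) (w + h₀) + conv (px (K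 i)) (ξ ω) (w + h₀) * ∑ j ∈ univ.erase i, (∏ k ∈ (univ.erase i).erase j, conv (K k) (ξ ω) (w + h₀)) * conv (px (K j)) (ξ ω) (w + h₀)) ∂P)) h₀ :=
    hasFDerivAt_int (fun ω h => conv (rev K₀) (ξ ω) w * ∑ i, (∏ j ∈ univ.erase i, conv (K j) (ξ ω) (w + h)) * conv (px (K i)) (ξ ω) (w + h)) (fun ω h => conv (rev K₀) (ξ ω) w * ∑ i, ((∏ j ∈ univ.erase i, conv (K j) (ξ ω) (w + h)) * conv (pt (px (K i))) (ξ ω) (w + h) + conv (px (K i)) (ξ ω) (w + h) * ∑ j ∈ univ.erase i, (∏ k ∈ (univ.erase i).erase j, conv (K k) (ξ ω) (w + h)) * conv (pt (K j)) (ξ ω) (w + h)))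
      (fun ω h => conv (rev K₀) (ξ ω) w * ∑ i, ((∏ j ∈ univ.erase i, conv (K j) (ξ ω) (w + h)) * conv (px (px (K i))) (ξ ω) (w + h) + conv (px (K i)) (ξ ω) (w + h) * ∑ j ∈ univ.erase i, (∏ k ∈ (univ.erase i).erase j, conv (K k) (ξ ω) (w + h)) * conv (px (K j)) (ξ ω) (w + h))) Cbig mVA mUA2 mVA2 bVA bUA2 bVA2
      (fun ω h => Aside2 K hK hKsupp (hcont ω) _ w h)
  have hBint1 : ∀ h₀ : ℝ × ℝ, HasFDerivAt (fun h => ∫ ω, conv (rev K₀) (ξ ω) (w - h) * ∏ k, conv (K k) (ξ ω) w ∂P)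
      (D2 (∫ ω, (∏ k, conv (K k) (ξ ω) w) * -conv (pt (rev K₀)) (ξ ω) (w - h₀) ∂P) (∫ ω, (∏ k, conv (K k) (ξ ω) w) * -conv (px (rev K₀)) (ξ ω) (w - h₀) ∂P)) h₀ :=
    hasFDerivAt_int (fun ω h => conv (rev K₀) (ξ ω) (w - h) * ∏ k, conv (K k) (ξ ω) w) (fun ω h => (∏ k, conv (K k) (ξ ω) w) * -conv (pt (rev K₀)) (ξ ω) (w - h))
      (fun ω h => (∏ k, conv (K k) (ξ ω) w) * -conv (px (rev K₀)) (ξ ω) (w - h)) Cbig mφB mUB mVB bφB bUB bVB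
      (fun ω h => Bside1 hr1 hrs (hcont ω) _ w h)
  have hBint2 : ∀ h₀ : ℝ × ℝ, HasFDerivAt (fun h => ∫ ω, (∏ k, conv (K k) (ξ ω) w) * -conv (px (rev K₀)) (ξ ω) (w - h) ∂P)
      (D2 (∫ ω, (∏ k, conv (K k) (ξ ω) w) * conv (pt (px (rev K₀))) (ξ ω) (w - h₀) ∂P) (∫ ω, (∏ k, conv (K k) (ξ ω) w) * conv (px (px (rev K₀))) (ξ ω) (w - h₀) ∂P)) h₀ :=
    hasFDerivAt_int (fun ω h => (∏ k, conv (K k) (ξ ω) w) * -conv (px (rev K₀)) (ξ ω) (w - h)) (fun ω h => (∏ k, conv (K k) (ξ ω) w) * conv (pt (px (rev K₀))) (ξ ω) (w - h))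
      (fun ω h => (∏ k, conv (K k) (ξ ω) w) * conv (px (px (rev K₀))) (ξ ω) (w - h)) Cbig mVB mUB2 mVB2 bVB bUB2 bVB2
      (fun ω h => Bside2 hrx1 hrxs (hcont ω) _ w h)
  -- A = B via stationarity
  have hAB : ∀ h : ℝ × ℝ, (∫ ω, conv (rev K₀) (ξ ω) w * ∏ k, conv (K k) (ξ ω) (w + h) ∂P) = ∫ ω, conv (rev K₀) (ξ ω) (w - h) * ∏ k, conv (K k) (ξ ω) w ∂P := by
    intro h
    set q : Fin (n + 1) → ℝ × ℝ → ℝ :=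
      Fin.cases (fun z => K₀ (z + (h - w))) (fun k z => K k (w - z)) with hq
    have hq0 : ∀ z, q 0 z = K₀ (z + (h - w)) := fun z => by simp [hq]
    have hqsucc : ∀ (k : Fin n) z, q k.succ z = K k (w - z) := fun k z => by simp [hq]
    have hqc : ∀ i, Continuous (q i) := by
      intro i
      induction i using Fin.cases with
      | zero =>
        have : q 0 = fun z => K₀ (z + (h - w)) := funext hq0
        rw [this]
        exact hK₀.continuous.comp (continuous_id.add continuous_const)
      | succ k =>
        have : q k.succ = fun z => K k (w - z) := funext (hqsucc k)
        rw [this]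
        exact (hcK k).comp (continuous_const.sub continuous_id)
    have hqs : ∀ i, HasCompactSupport (q i) := by
      intro i
      induction i using Fin.cases with
      | zero =>
        have e : q 0 = K₀ ∘ (Homeomorph.addRight (h - w)) := funext hq0
        rw [e]
        exact hK₀supp.comp_homeomorph _
      | succ k =>
        have e : q k.succ = K k ∘ (Homeomorph.subLeft w) := funext (hqsucc k)
        rw [e]
        exact (hKsupp k).comp_homeomorph _
    have hA_eq : ∀ ω, conv (rev K₀) (ξ ω) w * ∏ k, conv (K k) (ξ ω) (w + h) = ∏ i : Fin (n + 1), ∫ z : ℝ × ℝ, q i z * ξ ω (z + h) := by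
      intro ω
      rw [Fin.prod_univ_succ]
      have e0 : (∫ z : ℝ × ℝ, q 0 z * ξ ω (z + h)) = conv (rev K₀) (ξ ω) w := by
        have h1 : (∫ z : ℝ × ℝ, K₀ (z + h - w) * ξ ω (z + h)) = ∫ z : ℝ × ℝ, K₀ (z - w) * ξ ω z :=
          integral_add_right_eq_self (fun z : ℝ × ℝ => K₀ (z - w) * ξ ω z) h
        calc (∫ z : ℝ × ℝ, q 0 z * ξ ω (z + h)) = ∫ z : ℝ × ℝ, K₀ (z + h - w) * ξ ω (z + h) := by
              refine integral_congr_ae (Filter.Eventually.of_forall fun z => ?_)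
              dsimp only
              rw [hq0, add_sub_assoc]
          _ = ∫ z : ℝ × ℝ, K₀ (z - w) * ξ ω z := h1
          _ = conv (rev K₀) (ξ ω) w := by
              rw [conv]
              refine integral_congr_ae (Filter.Eventually.of_forall fun z => ?_)
              dsimp only
              simp only [rev, neg_sub]
      have ek : ∀ k : Fin n, conv (K k) (ξ ω) (w + h) = ∫ z : ℝ × ℝ, q k.succ z * ξ ω (z + h) := by
        intro k
        have h1 : (∫ z : ℝ × ℝ, K k (w + h - (z + h)) * ξ ω (z + h))
            = ∫ z : ℝ × ℝ, K k (w + h - z) * ξ ω z :=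
          integral_add_right_eq_self (fun z : ℝ × ℝ => K k (w + h - z) * ξ ω z) h
        calc conv (K k) (ξ ω) (w + h) = ∫ z : ℝ × ℝ, K k (w + h - z) * ξ ω z := by rw [conv]
          _ = ∫ z : ℝ × ℝ, K k (w + h - (z + h)) * ξ ω (z + h) := h1.symm
          _ = ∫ z : ℝ × ℝ, q k.succ z * ξ ω (z + h) := by
              refine integral_congr_ae (Filter.Eventually.of_forall fun z => ?_)
              dsimp only
              rw [hqsucc]
              congr 2
              abel
      rw [e0]
      exact congrArg (· * _) rfl |>.trans (by rw [Finset.prod_congr rfl fun k _ => ek k])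
    have hB_eq : ∀ ω, conv (rev K₀) (ξ ω) (w - h) * ∏ k, conv (K k) (ξ ω) w = ∏ i : Fin (n + 1), ∫ z : ℝ × ℝ, q i z * ξ ω (z + 0) := by
      intro ω
      rw [Fin.prod_univ_succ]
      have e0 : conv (rev K₀) (ξ ω) (w - h) = ∫ z : ℝ × ℝ, q 0 z * ξ ω (z + 0) := by
        rw [conv]
        refine integral_congr_ae (Filter.Eventually.of_forall fun z => ?_)
        dsimp only
        rw [hq0, add_zero]
        simp only [rev]
        congr 2
        abel
      have ek : ∀ k : Fin n, conv (K k) (ξ ω) w = ∫ z : ℝ × ℝ, q k.succ z * ξ ω (z + 0) := by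
        intro k
        rw [conv]
        refine integral_congr_ae (Filter.Eventually.of_forall fun z => ?_)
        dsimp only
        rw [hqsucc, add_zero]
      rw [← e0]
      exact congrArg (· * _) rfl |>.trans (by rw [Finset.prod_congr rfl fun k _ => ek k])
    calc ∫ ω, conv (rev K₀) (ξ ω) w * ∏ k, conv (K k) (ξ ω) (w + h) ∂P
        = ∫ ω, (∏ i : Fin (n + 1), ∫ z : ℝ × ℝ, q i z * ξ ω (z + h)) ∂P :=
          integral_congr_ae (Filter.Eventually.of_forall hA_eq)
      _ = ∫ z : Fin (n + 1) → ℝ × ℝ, (∏ i, q i (z i)) * ∫ ω, ∏ i, ξ ω (z i + h) ∂P :=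
          star hmeas hcont hbd (n + 1) q hqc hqs h
      _ = ∫ z : Fin (n + 1) → ℝ × ℝ, (∏ i, q i (z i)) * ∫ ω, ∏ i, ξ ω (z i + 0) ∂P := by
          refine integral_congr_ae (Filter.Eventually.of_forall fun z => ?_)
          simp only [add_zero]
          rw [hstat h z]
      _ = ∫ ω, (∏ i : Fin (n + 1), ∫ z : ℝ × ℝ, q i z * ξ ω (z + 0)) ∂P :=
          (star hmeas hcont hbd (n + 1) q hqc hqs 0).symm
      _ = ∫ ω, conv (rev K₀) (ξ ω) (w - h) * ∏ k, conv (K k) (ξ ω) w ∂P :=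
          integral_congr_ae (Filter.Eventually.of_forall fun ω => (hB_eq ω).symm)
  -- derivative comparison
  have hABfun : (fun h => ∫ ω, conv (rev K₀) (ξ ω) w * ∏ k, conv (K k) (ξ ω) (w + h) ∂P) = (fun h => ∫ ω, conv (rev K₀) (ξ ω) (w - h) * ∏ k, conv (K k) (ξ ω) w ∂P) := funext hAB
  have hD1 : ∀ h : ℝ × ℝ, D2 (∫ ω, conv (rev K₀) (ξ ω) w * ∑ i, (∏ j ∈ univ.erase i, conv (K j) (ξ ω) (w + h)) * conv (pt (K i)) (ξ ω) (w + h) ∂P) (∫ ω, conv (rev K₀) (ξ ω) w * ∑ i, (∏ j ∈ univ.erase i, conv (K j) (ξ ω) (w + h)) * conv (px (K i)) (ξ ω) (w + h) ∂P)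
      = D2 (∫ ω, (∏ k, conv (K k) (ξ ω) w) * -conv (pt (rev K₀)) (ξ ω) (w - h) ∂P) (∫ ω, (∏ k, conv (K k) (ξ ω) w) * -conv (px (rev K₀)) (ξ ω) (w - h) ∂P) :=
    fun h => (hAint1 h).unique (hABfun.symm ▸ hBint1 h)
  have hU0 : (∫ ω, conv (rev K₀) (ξ ω) w * ∑ i, (∏ j ∈ univ.erase i, conv (K j) (ξ ω) (w + 0)) * conv (pt (K i)) (ξ ω) (w + 0) ∂P) = ∫ ω, (∏ k, conv (K k) (ξ ω) w) * -conv (pt (rev K₀)) (ξ ω) (w - 0) ∂P := by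
    have h2 := congrArg (fun L : ℝ × ℝ →L[ℝ] ℝ => L ((1:ℝ), (0:ℝ))) (hD1 0)
    simpa using h2
  have hVfun : (fun h => ∫ ω, conv (rev K₀) (ξ ω) w * ∑ i, (∏ j ∈ univ.erase i, conv (K j) (ξ ω) (w + h)) * conv (px (K i)) (ξ ω) (w + h) ∂P) = (fun h => ∫ ω, (∏ k, conv (K k) (ξ ω) w) * -conv (px (rev K₀)) (ξ ω) (w - h) ∂P) := by
    refine funext fun h => ?_
    have h2 := congrArg (fun L : ℝ × ℝ →L[ℝ] ℝ => L ((0:ℝ), (1:ℝ))) (hD1 h)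
    simpa using h2
  have hD2 : D2 (∫ ω, conv (rev K₀) (ξ ω) w * ∑ i, ((∏ j ∈ univ.erase i, conv (K j) (ξ ω) (w + 0)) * conv (pt (px (K i))) (ξ ω) (w + 0) + conv (px (K i)) (ξ ω) (w + 0) * ∑ j ∈ univ.erase i, (∏ k ∈ (univ.erase i).erase j, conv (K k) (ξ ω) (w + 0)) * conv (pt (K j)) (ξ ω) (w + 0)) ∂P) (∫ ω, conv (rev K₀) (ξ ω) w * ∑ i, ((∏ j ∈ univ.erase i, conv (K j) (ξ ω) (w + 0)) * conv (px (px (K i))) (ξ ω) (w + 0) + conv (px (K i)) (ξ ω) (w + 0) * ∑ j ∈ univ.erase i, (∏ k ∈ (univ.erase i).erase j, conv (K k) (ξ ω) (w + 0)) * conv (px (K j)) (ξ ω) (w + 0)) ∂P)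
      = D2 (∫ ω, (∏ k, conv (K k) (ξ ω) w) * conv (pt (px (rev K₀))) (ξ ω) (w - 0) ∂P) (∫ ω, (∏ k, conv (K k) (ξ ω) w) * conv (px (px (rev K₀))) (ξ ω) (w - 0) ∂P) :=
    (hAint2 0).unique (hVfun.symm ▸ hBint2 0)
  have hV20 : (∫ ω, conv (rev K₀) (ξ ω) w * ∑ i, ((∏ j ∈ univ.erase i, conv (K j) (ξ ω) (w + 0)) * conv (px (px (K i))) (ξ ω) (w + 0) + conv (px (K i)) (ξ ω) (w + 0) * ∑ j ∈ univ.erase i, (∏ k ∈ (univ.erase i).erase j, conv (K k) (ξ ω) (w + 0)) * conv (px (K j)) (ξ ω) (w + 0)) ∂P) = ∫ ω, (∏ k, conv (K k) (ξ ω) w) * conv (px (px (rev K₀))) (ξ ω) (w - 0) ∂P := by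
    have h2 := congrArg (fun L : ℝ × ℝ →L[ℝ] ℝ => L ((0:ℝ), (1:ℝ))) hD2
    simpa using h2
  -- integrability for the final assembly
  have hInt : ∀ (g : Ω → ℝ), AEStronglyMeasurable g P → (∀ ω, |g ω| ≤ Cbig) → Integrable g P :=
    fun g hg hb => (integrable_const Cbig).mono' hg
      (Filter.Eventually.of_forall fun ω => by simpa [Real.norm_eq_abs] using hb ω)
  -- final assembly
  have hpointA : ∀ ω, conv (rev K₀) (ξ ω) w
      * ((∑ i, conv (Lop c (K i)) (ξ ω) w * ∏ k ∈ univ.erase i, conv (K k) (ξ ω) w)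
        - c * ∑ i, ∑ j ∈ univ.erase i, conv (px (K i)) (ξ ω) w * conv (px (K j)) (ξ ω) w
            * ∏ k ∈ (univ.erase i).erase j, conv (K k) (ξ ω) w)
      = (conv (rev K₀) (ξ ω) w * ∑ i, (∏ j ∈ univ.erase i, conv (K j) (ξ ω) (w + 0)) * conv (pt (K i)) (ξ ω) (w + 0)) - c * (conv (rev K₀) (ξ ω) w * ∑ i, ((∏ j ∈ univ.erase i, conv (K j) (ξ ω) (w + 0)) * conv (px (px (K i))) (ξ ω) (w + 0) + conv (px (K i)) (ξ ω) (w + 0) * ∑ j ∈ univ.erase i, (∏ k ∈ (univ.erase i).erase j, conv (K k) (ξ ω) (w + 0)) * conv (px (K j)) (ξ ω) (w + 0))) := by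
    intro ω
    simp only [add_zero]
    have e1 : (∑ i, conv (Lop c (K i)) (ξ ω) w * ∏ k ∈ univ.erase i, conv (K k) (ξ ω) w)
        = (∑ i, (∏ j ∈ univ.erase i, conv (K j) (ξ ω) w) * conv (pt (K i)) (ξ ω) w)
          - c * ∑ i, (∏ j ∈ univ.erase i, conv (K j) (ξ ω) w)
              * conv (px (px (K i))) (ξ ω) w := by
      rw [Finset.mul_sum, ← Finset.sum_sub_distrib]
      refine Finset.sum_congr rfl fun i _ => ?_
      rw [conv_Lop c (hK i) (hKsupp i) (hcont ω) w]
      ring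
    have e2 : (∑ i, ∑ j ∈ univ.erase i, conv (px (K i)) (ξ ω) w * conv (px (K j)) (ξ ω) w
          * ∏ k ∈ (univ.erase i).erase j, conv (K k) (ξ ω) w)
        = ∑ i, conv (px (K i)) (ξ ω) w
            * ∑ j ∈ univ.erase i, (∏ k ∈ (univ.erase i).erase j, conv (K k) (ξ ω) w)
                * conv (px (K j)) (ξ ω) w := by
      refine Finset.sum_congr rfl fun i _ => ?_
      rw [Finset.mul_sum]
      exact Finset.sum_congr rfl fun j _ => by ring
    rw [e1, e2, Finset.sum_add_distrib]
    ring
  have hpointB : ∀ ω, conv (rev (Lop c K₀)) (ξ ω) w * ∏ k, conv (K k) (ξ ω) w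
      = ((∏ k, conv (K k) (ξ ω) w) * -conv (pt (rev K₀)) (ξ ω) (w - 0)) - c * ((∏ k, conv (K k) (ξ ω) w) * conv (px (px (rev K₀))) (ξ ω) (w - 0)) := by
    intro ω
    simp only [sub_zero]
    rw [conv_revLop c hK₀ hK₀supp (hcont ω) w]
    ring
  calc ∫ ω, conv (rev K₀) (ξ ω) w
      * ((∑ i, conv (Lop c (K i)) (ξ ω) w * ∏ k ∈ univ.erase i, conv (K k) (ξ ω) w)
        - c * ∑ i, ∑ j ∈ univ.erase i, conv (px (K i)) (ξ ω) w * conv (px (K j)) (ξ ω) w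
            * ∏ k ∈ (univ.erase i).erase j, conv (K k) (ξ ω) w) ∂P
      = ∫ ω, (conv (rev K₀) (ξ ω) w * ∑ i, (∏ j ∈ univ.erase i, conv (K j) (ξ ω) (w + 0)) * conv (pt (K i)) (ξ ω) (w + 0)) - c * (conv (rev K₀) (ξ ω) w * ∑ i, ((∏ j ∈ univ.erase i, conv (K j) (ξ ω) (w + 0)) * conv (px (px (K i))) (ξ ω) (w + 0) + conv (px (K i)) (ξ ω) (w + 0) * ∑ j ∈ univ.erase i, (∏ k ∈ (univ.erase i).erase j, conv (K k) (ξ ω) (w + 0)) * conv (px (K j)) (ξ ω) (w + 0))) ∂P :=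
        integral_congr_ae (Filter.Eventually.of_forall hpointA)
    _ = (∫ ω, conv (rev K₀) (ξ ω) w * ∑ i, (∏ j ∈ univ.erase i, conv (K j) (ξ ω) (w + 0)) * conv (pt (K i)) (ξ ω) (w + 0) ∂P) - c * ∫ ω, conv (rev K₀) (ξ ω) w * ∑ i, ((∏ j ∈ univ.erase i, conv (K j) (ξ ω) (w + 0)) * conv (px (px (K i))) (ξ ω) (w + 0) + conv (px (K i)) (ξ ω) (w + 0) * ∑ j ∈ univ.erase i, (∏ k ∈ (univ.erase i).erase j, conv (K k) (ξ ω) (w + 0)) * conv (px (K j)) (ξ ω) (w + 0)) ∂P := by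
        rw [integral_sub (hInt _ (mUA 0) fun ω => bUA ω 0)
          ((hInt _ (mVA2 0) fun ω => bVA2 ω 0).const_mul c), integral_const_mul]
    _ = (∫ ω, (∏ k, conv (K k) (ξ ω) w) * -conv (pt (rev K₀)) (ξ ω) (w - 0) ∂P) - c * ∫ ω, (∏ k, conv (K k) (ξ ω) w) * conv (px (px (rev K₀))) (ξ ω) (w - 0) ∂P := by rw [hU0, hV20]
    _ = ∫ ω, ((∏ k, conv (K k) (ξ ω) w) * -conv (pt (rev K₀)) (ξ ω) (w - 0)) - c * ((∏ k, conv (K k) (ξ ω) w) * conv (px (px (rev K₀))) (ξ ω) (w - 0)) ∂P := by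
        rw [integral_sub (hInt _ (mUB 0) fun ω => bUB ω 0)
          ((hInt _ (mVB2 0) fun ω => bVB2 ω 0).const_mul c), integral_const_mul]
    _ = ∫ ω, conv (rev (Lop c K₀)) (ξ ω) w * ∏ k, conv (K k) (ξ ω) w ∂P :=
        integral_congr_ae (Filter.Eventually.of_forall fun ω => (hpointB ω).symm)
end
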